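/- arXiv:2010.03275 — 4 statements merged into one kernel-verified Lean document; each statement's English description precedes it below -/
import Mathlib

section
/- Let 1 ≤ k < n and let f : R^n → [0,∞] be defined by f(x) = (1+|x|)^{-k} (log(2+|x|))^{-δ} where k/n < δ < 1. Then for every affine k-plane P in R^n (i.e., every translate x + θ of a k-dimensional linear subspace θ), the integral of f over P with respect to k-dimensional Lebesgue measure is infinite. -/
open MeasureTheory Real

/-- The series `∑ (n+c)^(-δ)` diverges (in `ℝ≥0∞`) when `δ < 1`. -/
lemma aux_tsum_rpow_top (c : ℕ) {δ : ℝ} (hδu : δ < 1) :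
    (∑' j : ℕ, ENNReal.ofReal (((j + c : ℕ) : ℝ) ^ (-δ))) = ⊤ := by
  by_contra h
  have hs := ENNReal.summable_toReal h
  have hnn : ∀ j : ℕ, 0 ≤ ((j + c : ℕ) : ℝ) ^ (-δ) :=
    fun j => Real.rpow_nonneg (by positivity) _
  have hs' : Summable (fun j : ℕ => ((j + c : ℕ) : ℝ) ^ (-δ)) := by
    refine hs.congr fun j => ?_
    exact ENNReal.toReal_ofReal (hnn j)
  have hs2 : Summable (fun n : ℕ => (n : ℝ) ^ (-δ)) :=
    (summable_nat_add_iff c).mp hs'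
  have := Real.summable_nat_rpow.mp hs2
  linarith

/-- Let `1 ≤ k < n` and `f(x) = (1+|x|)^{-k} (log(2+|x|))^{-δ}` with `k/n < δ < 1`.
Then the integral of `f` over every affine `k`-plane (parametrized isometrically as
`x + φ(ℝ^k)` for a linear isometry `φ : ℝ^k → ℝ^n`) with respect to `k`-dimensional
Lebesgue measure is infinite. -/
theorem kplane_integral_infinite (n k : ℕ) (hk : 1 ≤ k) (hkn : k < n) (δ : ℝ)
    (hδl : (k : ℝ) / n < δ) (hδu : δ < 1)
    (x : EuclideanSpace ℝ (Fin n))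
    (φ : EuclideanSpace ℝ (Fin k) →ₗᵢ[ℝ] EuclideanSpace ℝ (Fin n)) :
    (∫⁻ z : EuclideanSpace ℝ (Fin k),
        ENNReal.ofReal ((1 + ‖x + φ z‖) ^ (-(k : ℝ)) *
          (Real.log (2 + ‖x + φ z‖)) ^ (-δ))) = ⊤ := by
  classical
  set E := EuclideanSpace ℝ (Fin k) with hE
  set g : E → ENNReal := fun z =>
    ENNReal.ofReal ((1 + ‖x + φ z‖) ^ (-(k : ℝ)) *
      (Real.log (2 + ‖x + φ z‖)) ^ (-δ)) with hg
  have hn0 : 0 < n := lt_of_le_of_lt (Nat.zero_le k) hkn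
  have hδ0 : 0 < δ := by
    refine lt_of_lt_of_le ?_ hδl.le
    have : (0 : ℝ) < k := by exact_mod_cast hk
    have : (0 : ℝ) < n := by exact_mod_cast hn0
    positivity
  obtain ⟨J, hJx⟩ := exists_nat_gt ‖x‖
  have hJ2 : ‖x‖ ≤ (2 : ℝ) ^ J := by
    refine hJx.le.trans ?_
    exact_mod_cast (Nat.lt_two_pow_self (n := J)).le
  -- dyadic shells
  set S : ℕ → Set E := fun j =>
    Metric.ball 0 ((2 : ℝ) ^ (J + j + 1)) \ Metric.ball 0 ((2 : ℝ) ^ (J + j)) with hS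
  have hmem : ∀ j z, z ∈ S j ↔ ‖z‖ < (2 : ℝ) ^ (J + j + 1) ∧ ¬ ‖z‖ < (2 : ℝ) ^ (J + j) := by
    intro j z
    simp [hS, mem_ball_zero_iff]
  have hm : ∀ j, MeasurableSet (S j) :=
    fun j => measurableSet_ball.diff measurableSet_ball
  have hdisj : Pairwise (Function.onFun Disjoint S) := by
    have key : ∀ i j : ℕ, i < j → Disjoint (S i) (S j) := by
      intro i j hij
      refine Set.disjoint_left.mpr fun z hzi hzj => ?_
      have h1 : ‖z‖ < (2 : ℝ) ^ (J + i + 1) := ((hmem i z).mp hzi).1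
      have h2 : ¬ ‖z‖ < (2 : ℝ) ^ (J + j) := ((hmem j z).mp hzj).2
      exact h2 (h1.trans_le (pow_le_pow_right₀ one_le_two (by omega)))
    intro i j hij
    rcases hij.lt_or_gt with h | h
    · exact key _ _ h
    · exact (key _ _ h).symm
  set μB : ENNReal := volume (Metric.ball (0 : E) 1) with hμB
  have hμB0 : μB ≠ 0 := (Metric.measure_ball_pos volume 0 one_pos).ne'
  have hμBt : μB ≠ ⊤ := measure_ball_lt_top.ne
  have hfr : Module.finrank ℝ E = k := finrank_euclideanSpace_fin
  have hball : ∀ r : ℝ, 0 < r →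
      volume (Metric.ball (0 : E) r) = ENNReal.ofReal (r ^ k) * μB := by
    intro r hr
    rw [Measure.addHaar_ball_of_pos volume 0 hr, hfr]
  -- lower bound for the volume of each shell
  have hvol : ∀ j, ENNReal.ofReal (((2 : ℝ) ^ (J + j)) ^ k) * μB ≤ volume (S j) := by
    intro j
    set r : ℝ := (2 : ℝ) ^ (J + j) with hr
    have hrpos : (0 : ℝ) < r := by positivity
    have hsub : Metric.ball (0 : E) ((2 : ℝ) ^ (J + j + 1)) ⊆ S j ∪ Metric.ball 0 r := by
      intro z hz
      by_cases hcase : ‖z‖ < r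
      · exact Or.inr (mem_ball_zero_iff.mpr hcase)
      · exact Or.inl ((hmem j z).mpr ⟨mem_ball_zero_iff.mp hz, hcase⟩)
    have hRk : 2 * r ^ k ≤ ((2 : ℝ) ^ (J + j + 1)) ^ k := by
      have h1 : (2 : ℝ) ^ (J + j + 1) = 2 * r := by rw [hr]; ring
      rw [h1, mul_pow]
      have h2 : (2 : ℝ) ≤ 2 ^ k := by
        calc (2 : ℝ) = 2 ^ 1 := (pow_one 2).symm
        _ ≤ 2 ^ k := pow_le_pow_right₀ one_le_two hk
      have h3 : (0 : ℝ) ≤ r ^ k := by positivity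
      nlinarith
    have hchain : ENNReal.ofReal (r ^ k) * μB + volume (Metric.ball (0 : E) r)
        ≤ volume (S j) + volume (Metric.ball (0 : E) r) := by
      calc ENNReal.ofReal (r ^ k) * μB + volume (Metric.ball (0 : E) r)
          = ENNReal.ofReal (r ^ k) * μB + ENNReal.ofReal (r ^ k) * μB := by
            rw [hball r hrpos]
        _ = ENNReal.ofReal (2 * r ^ k) * μB := by
            rw [← add_mul, ← ENNReal.ofReal_add (by positivity) (by positivity), two_mul]
        _ ≤ ENNReal.ofReal (((2 : ℝ) ^ (J + j + 1)) ^ k) * μB :=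
            mul_le_mul_left (ENNReal.ofReal_le_ofReal hRk) _
        _ = volume (Metric.ball (0 : E) ((2 : ℝ) ^ (J + j + 1))) :=
            (hball _ (by positivity)).symm
        _ ≤ volume (S j ∪ Metric.ball (0 : E) r) := measure_mono hsub
        _ ≤ volume (S j) + volume (Metric.ball (0 : E) r) := measure_union_le _ _
    exact (ENNReal.add_le_add_iff_right measure_ball_lt_top.ne).mp hchain
  -- constant lower bound on each shell
  set c : ℕ → ENNReal := fun j =>
    ENNReal.ofReal (((2 : ℝ) ^ (J + j + 3)) ^ (-(k : ℝ)) * ((J + j + 3 : ℕ) : ℝ) ^ (-δ))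
    with hc
  have hpoint : ∀ j, ∀ z ∈ S j, c j ≤ g z := by
    intro j z hz
    set t : ℝ := ‖x + φ z‖ with ht
    have ht0 : 0 ≤ t := norm_nonneg _
    have hz1 : ‖z‖ < (2 : ℝ) ^ (J + j + 1) := ((hmem j z).mp hz).1
    have hone : (1 : ℝ) ≤ (2 : ℝ) ^ (J + j + 1) := one_le_pow₀ one_le_two
    have hnorm : t ≤ (2 : ℝ) ^ (J + j + 2) := by
      have h1 : t ≤ ‖x‖ + ‖φ z‖ := norm_add_le _ _
      have h2 : ‖φ z‖ = ‖z‖ := φ.norm_map z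
      have h3 : ‖x‖ ≤ (2 : ℝ) ^ (J + j + 1) := by
        refine hJ2.trans (pow_le_pow_right₀ one_le_two (by omega))
      have h4 : (2 : ℝ) ^ (J + j + 2) = (2 : ℝ) ^ (J + j + 1) + (2 : ℝ) ^ (J + j + 1) := by
        ring
      rw [h4]; rw [h2] at h1; linarith
    have hpow23 : (2 : ℝ) ^ (J + j + 3) = (2 : ℝ) ^ (J + j + 2) + (2 : ℝ) ^ (J + j + 2) := by
      ring
    have hone2 : (2 : ℝ) ≤ (2 : ℝ) ^ (J + j + 2) := by
      calc (2 : ℝ) = 2 ^ 1 := (pow_one 2).symm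
      _ ≤ (2 : ℝ) ^ (J + j + 2) := pow_le_pow_right₀ one_le_two (by omega)
    have hb1 : 1 + t ≤ (2 : ℝ) ^ (J + j + 3) := by rw [hpow23]; linarith
    have hb2 : 2 + t ≤ (2 : ℝ) ^ (J + j + 3) := by rw [hpow23]; linarith
    have h1 : ((2 : ℝ) ^ (J + j + 3)) ^ (-(k : ℝ)) ≤ (1 + t) ^ (-(k : ℝ)) := by
      refine Real.rpow_le_rpow_of_nonpos (by linarith) hb1 ?_
      simp [neg_nonpos]
    have hlogpos : 0 < Real.log (2 + t) := Real.log_pos (by linarith)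
    have hlogle : Real.log (2 + t) ≤ ((J + j + 3 : ℕ) : ℝ) := by
      have hl1 : Real.log (2 + t) ≤ Real.log ((2 : ℝ) ^ (J + j + 3)) :=
        Real.log_le_log (by linarith) hb2
      have hl2 : Real.log ((2 : ℝ) ^ (J + j + 3)) = ((J + j + 3 : ℕ) : ℝ) * Real.log 2 := by
        rw [Real.log_pow]
      have hl3 : Real.log 2 ≤ 1 := by
        have := Real.log_le_sub_one_of_pos (by norm_num : (0:ℝ) < 2)
        linarith
      have hl0 : (0:ℝ) ≤ ((J + j + 3 : ℕ) : ℝ) := by positivity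
      have hl5 : (0:ℝ) ≤ Real.log 2 := Real.log_nonneg one_le_two
      have hl4 : ((J + j + 3 : ℕ) : ℝ) * Real.log 2 ≤ ((J + j + 3 : ℕ) : ℝ) := by
        nlinarith
      rw [hl2] at hl1
      linarith
    have h2 : ((J + j + 3 : ℕ) : ℝ) ^ (-δ) ≤ (Real.log (2 + t)) ^ (-δ) :=
      Real.rpow_le_rpow_of_nonpos hlogpos hlogle (by linarith)
    refine ENNReal.ofReal_le_ofReal ?_
    refine mul_le_mul h1 h2 (Real.rpow_nonneg (by positivity) _)
      (Real.rpow_nonneg (by linarith) _)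
  -- per shell lower bound for the integral
  have hshell : ∀ j, ENNReal.ofReal (((2 : ℝ) ^ (J + j)) ^ k) * μB * c j
      ≤ ∫⁻ z in S j, g z := by
    intro j
    calc ENNReal.ofReal (((2 : ℝ) ^ (J + j)) ^ k) * μB * c j
        ≤ volume (S j) * c j := mul_le_mul_left (hvol j) _
      _ = c j * volume (S j) := mul_comm _ _
      _ = ∫⁻ _ in S j, c j := (setLIntegral_const _ _).symm
      _ ≤ ∫⁻ z in S j, g z := setLIntegral_mono' (hm j) (hpoint j)
  -- the term simplifies to a constant times `(J+j+3)^{-δ}`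
  set Cst : ENNReal := ENNReal.ofReal ((2 : ℝ) ^ (-(3 : ℝ) * k)) with hCst
  have hCst0 : Cst ≠ 0 := by
    rw [hCst]
    simp only [ne_eq, ENNReal.ofReal_eq_zero, not_le]
    positivity
  have hterm : ∀ j, ENNReal.ofReal (((2 : ℝ) ^ (J + j)) ^ k) * μB * c j
      = μB * Cst * ENNReal.ofReal (((J + j + 3 : ℕ) : ℝ) ^ (-δ)) := by
    intro j
    have harith : ((2 : ℝ) ^ (J + j)) ^ k * ((2 : ℝ) ^ (J + j + 3)) ^ (-(k : ℝ))
        = (2 : ℝ) ^ (-(3 : ℝ) * k) := by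
      rw [← pow_mul, ← Real.rpow_natCast 2 ((J + j) * k), ← Real.rpow_natCast 2 (J + j + 3),
        ← Real.rpow_mul (by norm_num : (0:ℝ) ≤ 2), ← Real.rpow_add (by norm_num : (0:ℝ) < 2)]
      congr 1
      push_cast
      ring
    simp only [hc]
    rw [ENNReal.ofReal_mul (Real.rpow_nonneg (by positivity) _)]
    rw [show ENNReal.ofReal (((2 : ℝ) ^ (J + j)) ^ k) * μB *
        (ENNReal.ofReal (((2 : ℝ) ^ (J + j + 3)) ^ (-(k : ℝ))) *
          ENNReal.ofReal (((J + j + 3 : ℕ) : ℝ) ^ (-δ)))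
      = μB * (ENNReal.ofReal (((2 : ℝ) ^ (J + j)) ^ k) *
          ENNReal.ofReal (((2 : ℝ) ^ (J + j + 3)) ^ (-(k : ℝ)))) *
          ENNReal.ofReal (((J + j + 3 : ℕ) : ℝ) ^ (-δ)) by ring]
    rw [← ENNReal.ofReal_mul (by positivity), harith, ← hCst]
  -- summing up
  have hsum : (∑' j : ℕ, ENNReal.ofReal (((2 : ℝ) ^ (J + j)) ^ k) * μB * c j) = ⊤ := by
    have h1 : (∑' j : ℕ, ENNReal.ofReal (((2 : ℝ) ^ (J + j)) ^ k) * μB * c j)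
        = μB * Cst * ∑' j : ℕ, ENNReal.ofReal (((J + j + 3 : ℕ) : ℝ) ^ (-δ)) := by
      rw [← ENNReal.tsum_mul_left]
      exact tsum_congr hterm
    rw [h1]
    have h2 : (∑' j : ℕ, ENNReal.ofReal (((J + j + 3 : ℕ) : ℝ) ^ (-δ))) = ⊤ := by
      have := aux_tsum_rpow_top (J + 3) hδu
      rw [← this]
      refine tsum_congr fun j => ?_
      congr 3
      omega
    rw [h2, ENNReal.mul_top]
    exact mul_ne_zero hμB0 hCst0
  -- conclude
  have hfinal : (⊤ : ENNReal) ≤ ∫⁻ z : E, g z := by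
    calc (⊤ : ENNReal) = ∑' j : ℕ, ENNReal.ofReal (((2 : ℝ) ^ (J + j)) ^ k) * μB * c j :=
          hsum.symm
      _ ≤ ∑' j : ℕ, ∫⁻ z in S j, g z := ENNReal.tsum_le_tsum hshell
      _ = ∫⁻ z in ⋃ j, S j, g z := (lintegral_iUnion hm hdisj g).symm
      _ ≤ ∫⁻ z : E, g z := setLIntegral_le_lintegral _ _
  exact top_le_iff.mp hfinal
end

section
/- Let 1 < p < ∞, α = n/p, and define B_α f(ω) = ∫_0^∞ f(tω) t^{α-1} dt for ω ∈ S^{n-1}. Then ‖B_α f‖_{L^p(S^{n-1})} ≤ C ‖f‖_{L^{p,1}(R^n)} for all measurable f : R^n → C, with C independent of f. -/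
open MeasureTheory Metric Set Real
open scoped ENNReal

/-- The Lorentz `L^{p,1}` (quasi-)norm of `f` with respect to a measure `μ`, expressed
through the distribution function: `‖f‖_{p,1} = ∫₀^∞ μ{|f| > l}^{1/p} dl`. -/
noncomputable def lorentzNorm₁ {X : Type*} [MeasurableSpace X] (μ : Measure X)
    (p : ℝ) (f : X → ℂ) : ℝ≥0∞ :=
  ∫⁻ l in Ioi (0 : ℝ), (μ {x | l < ‖f x‖}) ^ (1 / p)

lemma iSup_min_natCast (a : ℝ≥0∞) : ⨆ k : ℕ, min a (k : ℝ≥0∞) = a := by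
  refine le_antisymm (iSup_le fun k => min_le_left _ _) ?_
  rcases eq_or_ne a ⊤ with rfl | ha
  · have : ⨆ k : ℕ, min (⊤ : ℝ≥0∞) (k : ℝ≥0∞) = ⨆ k : ℕ, (k : ℝ≥0∞) := by
      refine iSup_congr fun k => min_eq_right le_top
    rw [this, ENNReal.iSup_natCast]
  · obtain ⟨k, hk⟩ := ENNReal.exists_nat_gt ha
    calc a = min a (k : ℝ≥0∞) := (min_eq_left hk.le).symm
    _ ≤ ⨆ k : ℕ, min a (k : ℝ≥0∞) := le_iSup (fun k : ℕ => min a (k : ℝ≥0∞)) k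

lemma iSup_rpow_ge {f : ℕ → ℝ≥0∞} {p : ℝ} (hp : 0 < p) :
    (⨆ k, f k) ^ p ≤ ⨆ k, f k ^ p := by
  have h : (⨆ k, f k) ≤ (⨆ k, f k ^ p) ^ (1 / p) := by
    refine iSup_le fun j => ?_
    have := ENNReal.rpow_le_rpow (le_iSup (fun k => f k ^ p) j) (by positivity : (0:ℝ) ≤ 1 / p)
    rwa [← ENNReal.rpow_mul, mul_one_div_cancel hp.ne', ENNReal.rpow_one] at this
  calc (⨆ k, f k) ^ p ≤ ((⨆ k, f k ^ p) ^ (1 / p)) ^ p := ENNReal.rpow_le_rpow h hp.le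
  _ = ⨆ k, f k ^ p := by
      rw [← ENNReal.rpow_mul, one_div_mul_cancel hp.ne', ENNReal.rpow_one]

lemma minkowski_lintegral {X : Type*} [MeasurableSpace X] (μ : Measure X)
    [IsFiniteMeasure μ] {p : ℝ} (hp : 1 < p) {G : X → ℝ → ℝ≥0∞}
    (hG : Measurable (Function.uncurry G)) :
    (∫⁻ x, (∫⁻ l in Ioi (0:ℝ), G x l) ^ p ∂μ) ^ (1 / p)
      ≤ ∫⁻ l in Ioi (0:ℝ), (∫⁻ x, G x l ^ p ∂μ) ^ (1 / p) := by
  have hp0 : (0:ℝ) < p := lt_trans one_pos hp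
  have hpq : p.HolderConjugate (p.conjExponent) := Real.HolderConjugate.conjExponent hp
  set q : ℝ := p.conjExponent with hq
  have hq0 : (0:ℝ) < q := hpq.symm.pos
  set J := ∫⁻ l in Ioi (0:ℝ), (∫⁻ x, G x l ^ p ∂μ) ^ (1 / p) with hJ
  set Gk : ℕ → X → ℝ → ℝ≥0∞ := fun k x l => min (G x l) (k : ℝ≥0∞) with hGkdef
  have hGkm : ∀ k, Measurable (Function.uncurry (Gk k)) := fun k => hG.min measurable_const
  set Φ : ℕ → X → ℝ≥0∞ := fun k x => ∫⁻ l in Ioc (0:ℝ) (k:ℝ), Gk k x l with hΦdef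
  have hΦm : ∀ k, Measurable (Φ k) := fun k => (hGkm k).lintegral_prod_right
  have hmono : Monotone Φ := by
    intro k k' hk x
    exact lintegral_mono' (Measure.restrict_mono (Ioc_subset_Ioc le_rfl (Nat.cast_le.2 hk)) le_rfl)
      (fun l => min_le_min le_rfl (Nat.cast_le.2 hk))
  have key : ∀ x, (∫⁻ l in Ioi (0:ℝ), G x l) = ⨆ k, Φ k x := by
    intro x
    have hGx : Measurable (G x) := hG.comp measurable_prodMk_left
    have h1 : ∀ k, Φ k x =
        ∫⁻ l, (Ioc (0:ℝ) (k:ℝ)).indicator (fun l => min (G x l) (k : ℝ≥0∞)) l := by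
      intro k
      rw [lintegral_indicator measurableSet_Ioc]
    have h2 : (∫⁻ l in Ioi (0:ℝ), G x l) = ∫⁻ l, (Ioi (0:ℝ)).indicator (G x) l :=
      (lintegral_indicator measurableSet_Ioi _).symm
    simp only [h1, h2]
    rw [← lintegral_iSup]
    · refine lintegral_congr fun l => ?_
      by_cases hl : l ∈ Ioi (0:ℝ)
      · rw [Set.indicator_of_mem hl]
        refine le_antisymm ?_ (iSup_le fun k => le_trans (Set.indicator_le_self _ _ l) (min_le_left _ _))
        · conv_lhs => rw [← iSup_min_natCast (G x l)]
          refine iSup_le fun k => ?_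
          set N : ℕ := max k ⌈l⌉₊ with hN
          have hlN : l ∈ Ioc (0:ℝ) (N:ℝ) :=
            ⟨hl, le_trans (Nat.le_ceil l) (Nat.cast_le.2 (le_max_right _ _))⟩
          calc min (G x l) (k : ℝ≥0∞) ≤ min (G x l) (N : ℝ≥0∞) :=
                min_le_min le_rfl (Nat.cast_le.2 (le_max_left _ _))
          _ = (Ioc (0:ℝ) (N:ℝ)).indicator (fun l => min (G x l) (N : ℝ≥0∞)) l :=
                (Set.indicator_of_mem hlN (fun l => min (G x l) (N : ℝ≥0∞))).symm
          _ ≤ ⨆ k : ℕ, (Ioc (0:ℝ) (k:ℝ)).indicator (fun l => min (G x l) (k : ℝ≥0∞)) l :=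
                le_iSup (fun k : ℕ => (Ioc (0:ℝ) (k:ℝ)).indicator
                  (fun l => min (G x l) (k : ℝ≥0∞)) l) N
      · rw [Set.indicator_of_notMem hl]
        refine le_antisymm zero_le (iSup_le fun k => ?_)
        rw [Set.indicator_of_notMem (fun h => hl h.1)]
    · exact fun k => ((hGx.min measurable_const).indicator measurableSet_Ioc)
    · intro k k' hk l
      dsimp only
      by_cases hl : l ∈ Ioc (0:ℝ) (k:ℝ)
      · rw [Set.indicator_of_mem hl, Set.indicator_of_mem
          (Ioc_subset_Ioc le_rfl (Nat.cast_le.2 hk) hl)]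
        exact min_le_min le_rfl (Nat.cast_le.2 hk)
      · rw [Set.indicator_of_notMem hl]
        exact zero_le
  set Ik : ℕ → ℝ≥0∞ := fun k => ∫⁻ x, (Φ k x) ^ p ∂μ with hIkdef
  have hIkfin : ∀ k, Ik k ≠ ⊤ := by
    intro k
    set B : ℝ≥0∞ := (k : ℝ≥0∞) * ENNReal.ofReal (k : ℝ) with hB
    have hΦle : ∀ x, Φ k x ≤ B := by
      intro x
      calc Φ k x ≤ ∫⁻ _ in Ioc (0:ℝ) (k:ℝ), (k : ℝ≥0∞) :=
            lintegral_mono fun l => min_le_right _ _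
      _ = (k : ℝ≥0∞) * volume (Ioc (0:ℝ) (k:ℝ)) := setLIntegral_const _ _
      _ = B := by rw [Real.volume_Ioc, sub_zero]
    have hBfin : B ^ p ≠ ⊤ :=
      (ENNReal.rpow_lt_top_of_nonneg hp0.le
        (ENNReal.mul_ne_top (ENNReal.natCast_ne_top k) ENNReal.ofReal_ne_top)).ne
    refine ne_top_of_le_ne_top ?_ (le_trans (lintegral_mono fun x =>
      ENNReal.rpow_le_rpow (hΦle x) hp0.le) (le_of_eq (lintegral_const _)))
    exact ENNReal.mul_ne_top hBfin (measure_ne_top μ univ)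
  have hstep : ∀ k, Ik k ≤ J * (Ik k) ^ (1 / q) := by
    intro k
    have hHm : Measurable (fun z : X × ℝ => Gk k z.1 z.2 * (Φ k z.1) ^ (p - 1)) :=
      (hGkm k).mul (((hΦm k).comp measurable_fst).pow_const _)
    have hGxm : ∀ x, Measurable (fun l => Gk k x l) := fun x =>
      (hGkm k).comp measurable_prodMk_left
    calc Ik k = ∫⁻ x, Φ k x * (Φ k x) ^ (p - 1) ∂μ := by
          refine lintegral_congr fun x => ?_
          rw [show p = 1 + (p - 1) by ring, ENNReal.rpow_add_of_nonneg _ _ zero_le_one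
            (by linarith), ENNReal.rpow_one]
          ring_nf
    _ = ∫⁻ x, (∫⁻ l in Ioc (0:ℝ) (k:ℝ), Gk k x l * (Φ k x) ^ (p - 1)) ∂μ :=
          lintegral_congr fun x => (lintegral_mul_const _ (hGxm x)).symm
    _ = ∫⁻ l in Ioc (0:ℝ) (k:ℝ), ∫⁻ x, Gk k x l * (Φ k x) ^ (p - 1) ∂μ :=
          lintegral_lintegral_swap hHm.aemeasurable
    _ ≤ ∫⁻ l in Ioc (0:ℝ) (k:ℝ),
          (∫⁻ x, (Gk k x l) ^ p ∂μ) ^ (1/p) * (∫⁻ x, ((Φ k x) ^ (p-1)) ^ q ∂μ) ^ (1/q) := by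
          refine lintegral_mono fun l => ?_
          exact ENNReal.lintegral_mul_le_Lp_mul_Lq μ hpq
            (((hGkm k).comp (measurable_prodMk_right)).aemeasurable)
            (((hΦm k).pow_const _).aemeasurable)
    _ ≤ ∫⁻ l in Ioc (0:ℝ) (k:ℝ), (∫⁻ x, (G x l) ^ p ∂μ) ^ (1/p) * (Ik k) ^ (1/q) := by
          refine lintegral_mono fun l => mul_le_mul' ?_ (le_of_eq ?_)
          · refine ENNReal.rpow_le_rpow (lintegral_mono fun x => ?_) (by positivity)
            exact ENNReal.rpow_le_rpow (min_le_left _ _) hp0.le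
          · congr 1
            refine lintegral_congr fun x => ?_
            rw [← ENNReal.rpow_mul]
            congr 1
            have hne : p - 1 ≠ 0 := by linarith
            rw [hq, Real.conjExponent]
            field_simp
    _ = (∫⁻ l in Ioc (0:ℝ) (k:ℝ), (∫⁻ x, (G x l) ^ p ∂μ) ^ (1/p)) * (Ik k) ^ (1/q) := by
          have hm1 : Measurable fun l => ∫⁻ x, G x l ^ p ∂μ :=
            Measurable.lintegral_prod_left (f := fun x l => G x l ^ p) (hG.pow_const p)
          exact lintegral_mul_const _ (hm1.pow_const _)
    _ ≤ J * (Ik k) ^ (1/q) := by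
          refine mul_le_mul_left ?_ _
          exact lintegral_mono' (Measure.restrict_mono Ioc_subset_Ioi_self le_rfl) le_rfl
  have hIk_le : ∀ k, (Ik k) ^ (1/p) ≤ J := by
    intro k
    rcases eq_or_ne (Ik k) 0 with h0 | h0
    · rw [h0, ENNReal.zero_rpow_of_pos (by positivity)]
      exact zero_le
    · have h1 : Ik k = (Ik k) ^ (1/p) * (Ik k) ^ (1/q) := by
        rw [← ENNReal.rpow_add_of_nonneg _ _ (by positivity) (by positivity)]
        rw [one_div, one_div, hpq.inv_add_inv_eq_one, ENNReal.rpow_one]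
      have h2 := hstep k
      nth_rewrite 1 [h1] at h2
      have hne : (Ik k) ^ (1/q) ≠ 0 := by
        simp only [ne_eq, ENNReal.rpow_eq_zero_iff, not_or, not_and]
        exact ⟨fun h => absurd h h0, fun h => absurd h (hIkfin k)⟩
      have hnetop : (Ik k) ^ (1/q) ≠ ⊤ :=
        (ENNReal.rpow_lt_top_of_nonneg (by positivity) (hIkfin k)).ne
      exact (ENNReal.mul_le_mul_iff_left hne hnetop).1 h2
  have hIJ : ∫⁻ x, (∫⁻ l in Ioi (0:ℝ), G x l) ^ p ∂μ ≤ J ^ p := by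
    calc ∫⁻ x, (∫⁻ l in Ioi (0:ℝ), G x l) ^ p ∂μ
        = ∫⁻ x, (⨆ k, Φ k x) ^ p ∂μ := lintegral_congr fun x => by rw [key x]
    _ ≤ ∫⁻ x, ⨆ k, (Φ k x) ^ p ∂μ := lintegral_mono fun x => iSup_rpow_ge hp0
    _ = ⨆ k, Ik k := lintegral_iSup (fun k => (hΦm k).pow_const p)
          (fun k k' hk x => ENNReal.rpow_le_rpow (hmono hk x) hp0.le)
    _ ≤ J ^ p := by
          refine iSup_le fun k => ?_
          have := ENNReal.rpow_le_rpow (hIk_le k) hp0.le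
          rwa [← ENNReal.rpow_mul, one_div_mul_cancel hp0.ne', ENNReal.rpow_one] at this
  calc (∫⁻ x, (∫⁻ l in Ioi (0:ℝ), G x l) ^ p ∂μ) ^ (1/p)
      ≤ (J ^ p) ^ (1/p) := ENNReal.rpow_le_rpow hIJ (by positivity)
  _ = J := by rw [← ENNReal.rpow_mul, mul_one_div_cancel hp0.ne', ENNReal.rpow_one]

lemma keyA {n : ℕ} (hn : 0 < n) {p α : ℝ} (hp : 1 < p) (hα : α = n / p)
    {A : Set ℝ} (hA : MeasurableSet A) (hA' : A ⊆ Ioi 0) :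
    ∫⁻ t in A, ENNReal.ofReal (t ^ (α - 1)) ≤
      ENNReal.ofReal (1/α + 1) * (∫⁻ t in A, ENNReal.ofReal (t ^ ((n:ℝ) - 1))) ^ (1/p) := by
  have hp0 : (0:ℝ) < p := one_pos.trans hp
  have hn0 : (0:ℝ) < n := Nat.cast_pos.2 hn
  have hn1 : (1:ℝ) ≤ n := Nat.one_le_cast.2 hn
  have hα0 : 0 < α := by rw [hα]; positivity
  have hαn : α - n < 0 := by
    rw [hα]
    have := div_lt_self hn0 hp
    linarith
  set m := ∫⁻ t in A, ENNReal.ofReal (t ^ ((n:ℝ) - 1)) with hm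
  have hC0 : ENNReal.ofReal (1/α + 1) ≠ 0 := by
    simp only [ne_eq, ENNReal.ofReal_eq_zero, not_le]
    positivity
  rcases eq_top_or_lt_top m with htop | hmfin
  · rw [htop, ENNReal.top_rpow_of_pos (by positivity), ENNReal.mul_top hC0]
    exact le_top
  rcases eq_or_ne m 0 with h0 | h0
  · have hnull : volume A = 0 := by
      have cover : A ⊆ ⋃ k : ℕ, A ∩ Ioi (1/(k+1) : ℝ) := by
        intro t ht
        obtain ⟨k, hk⟩ := exists_nat_one_div_lt (mem_Ioi.1 (hA' ht))
        exact mem_iUnion.2 ⟨k, ht, hk⟩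
      refine measure_mono_null cover (measure_iUnion_null fun k => ?_)
      have hε : (0:ℝ) < 1/(k+1) := by positivity
      have h1 : ENNReal.ofReal ((1/(k+1):ℝ) ^ ((n:ℝ)-1)) * volume (A ∩ Ioi (1/(k+1):ℝ)) ≤ m := by
        calc ENNReal.ofReal ((1/(k+1):ℝ) ^ ((n:ℝ)-1)) * volume (A ∩ Ioi (1/(k+1):ℝ))
            = ∫⁻ _ in A ∩ Ioi (1/(k+1):ℝ), ENNReal.ofReal ((1/(k+1):ℝ) ^ ((n:ℝ)-1)) :=
              (setLIntegral_const _ _).symm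
        _ ≤ ∫⁻ t in A ∩ Ioi (1/(k+1):ℝ), ENNReal.ofReal (t ^ ((n:ℝ)-1)) := by
              refine setLIntegral_mono (measurable_id.pow_const _).ennreal_ofReal
                fun t ht => ENNReal.ofReal_le_ofReal ?_
              exact Real.rpow_le_rpow hε.le ht.2.le (by linarith)
        _ ≤ m := lintegral_mono_set inter_subset_left
      rw [h0] at h1
      have h2 : ENNReal.ofReal ((1/(k+1):ℝ) ^ ((n:ℝ)-1)) ≠ 0 := by
        simp only [ne_eq, ENNReal.ofReal_eq_zero, not_le]
        positivity
      rcases (mul_eq_zero.1 (le_antisymm h1 zero_le)) with h | h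
      · exact absurd h h2
      · exact h
    rw [setLIntegral_measure_zero A _ hnull]
    exact zero_le
  · have hM0 : 0 < m.toReal := ENNReal.toReal_pos h0 hmfin.ne
    set M := m.toReal with hMdef
    set r := M ^ (1/(n:ℝ)) with hr
    have hr0 : 0 < r := Real.rpow_pos_of_pos hM0 _
    have hIoc : ∫⁻ t in Ioc (0:ℝ) r, ENNReal.ofReal (t ^ (α - 1)) = ENNReal.ofReal (r ^ α / α) := by
      have hint : IntegrableOn (fun t : ℝ => t ^ (α - 1)) (Ioc 0 r) volume :=
        (intervalIntegral.intervalIntegrable_rpow' (by linarith)).1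
      rw [← ofReal_integral_eq_lintegral_ofReal hint ?_]
      · congr 1
        rw [← intervalIntegral.integral_of_le hr0.le, integral_rpow (Or.inl (by linarith)),
          sub_add_cancel, Real.zero_rpow hα0.ne']
        ring
      · filter_upwards [ae_restrict_mem measurableSet_Ioc] with t ht
        exact Real.rpow_nonneg ht.1.le _
    have hsplit : ∫⁻ t in A, ENNReal.ofReal (t ^ (α - 1)) ≤
        ENNReal.ofReal (r ^ α / α) + ENNReal.ofReal (r ^ (α - n)) * m := by
      have hsub : A ⊆ Ioc 0 r ∪ (A ∩ Ioi r) := by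
        intro t ht
        rcases le_or_gt t r with h | h
        · exact Or.inl ⟨hA' ht, h⟩
        · exact Or.inr ⟨ht, h⟩
      calc ∫⁻ t in A, ENNReal.ofReal (t ^ (α - 1))
          ≤ ∫⁻ t in Ioc 0 r ∪ (A ∩ Ioi r), ENNReal.ofReal (t ^ (α - 1)) :=
            lintegral_mono_set hsub
      _ ≤ (∫⁻ t in Ioc (0:ℝ) r, ENNReal.ofReal (t ^ (α - 1)))
            + ∫⁻ t in A ∩ Ioi r, ENNReal.ofReal (t ^ (α - 1)) := lintegral_union_le _ _ _
      _ ≤ ENNReal.ofReal (r ^ α / α) + ENNReal.ofReal (r ^ (α - n)) * m := by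
            refine add_le_add (le_of_eq hIoc) ?_
            calc ∫⁻ t in A ∩ Ioi r, ENNReal.ofReal (t ^ (α - 1))
                ≤ ∫⁻ t in A ∩ Ioi r,
                    ENNReal.ofReal (r ^ (α - n)) * ENNReal.ofReal (t ^ ((n:ℝ) - 1)) := by
                  refine setLIntegral_mono
                    (measurable_const.mul ((measurable_id.pow_const _).ennreal_ofReal))
                    fun t ht => ?_
                  have ht0 : 0 < t := hr0.trans ht.2
                  rw [← ENNReal.ofReal_mul (Real.rpow_nonneg hr0.le _)]
                  refine ENNReal.ofReal_le_ofReal ?_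
                  have hEq : t ^ (α - 1) = t ^ (α - n) * t ^ ((n:ℝ) - 1) := by
                    rw [← Real.rpow_add ht0]
                    ring_nf
                  rw [hEq]
                  exact mul_le_mul_of_nonneg_right
                    (Real.rpow_le_rpow_of_nonpos hr0 ht.2.le hαn.le)
                    (Real.rpow_nonneg ht0.le _)
            _ = ENNReal.ofReal (r ^ (α - n)) * ∫⁻ t in A ∩ Ioi r, ENNReal.ofReal (t ^ ((n:ℝ)-1)) :=
                  lintegral_const_mul _ ((measurable_id.pow_const _).ennreal_ofReal)
            _ ≤ ENNReal.ofReal (r ^ (α - n)) * m :=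
                  mul_le_mul_right (lintegral_mono_set inter_subset_left) _
    have hmM : m = ENNReal.ofReal M := (ENNReal.ofReal_toReal hmfin.ne).symm
    have hrα : r ^ α = M ^ (1/p) := by
      rw [hr, ← Real.rpow_mul hM0.le]
      congr 1
      rw [hα]
      field_simp
    have hrαn : r ^ (α - n) * M = M ^ (1/p) := by
      rw [hr, ← Real.rpow_mul hM0.le]
      nth_rewrite 2 [show M = M ^ (1:ℝ) by rw [Real.rpow_one]]
      rw [← Real.rpow_add hM0]
      congr 1
      rw [hα]
      field_simp
      ring_nf
    calc ∫⁻ t in A, ENNReal.ofReal (t ^ (α - 1))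
        ≤ ENNReal.ofReal (r ^ α / α) + ENNReal.ofReal (r ^ (α - n)) * m := hsplit
    _ = ENNReal.ofReal (M ^ (1/p) / α) + ENNReal.ofReal (r ^ (α - n) * M) := by
        rw [hrα, hmM, ← ENNReal.ofReal_mul (Real.rpow_nonneg hr0.le _)]
    _ = ENNReal.ofReal (M ^ (1/p) / α + M ^ (1/p)) := by
        rw [hrαn, ← ENNReal.ofReal_add (by positivity) (by positivity)]
    _ = ENNReal.ofReal ((1/α + 1) * M ^ (1/p)) := by
        congr 1
        ring
    _ = ENNReal.ofReal (1/α + 1) * ENNReal.ofReal (M ^ (1/p)) :=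
        ENNReal.ofReal_mul (by positivity)
    _ = ENNReal.ofReal (1/α + 1) * m ^ (1/p) := by
        rw [hmM, ENNReal.ofReal_rpow_of_pos hM0]

variable {m : ℕ}

local notation "E" => EuclideanSpace ℝ (Fin (m+1))

lemma polar_lintegral (h : EuclideanSpace ℝ (Fin (m+1)) → ℝ≥0∞) (hh : Measurable h) :
    ∫⁻ ω : sphere (0 : EuclideanSpace ℝ (Fin (m+1))) 1,
        (∫⁻ r in Ioi (0:ℝ), ENNReal.ofReal (r ^ m) * h (r • (ω : EuclideanSpace ℝ (Fin (m+1)))))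
      ∂(volume : Measure (EuclideanSpace ℝ (Fin (m+1)))).toSphere
    = ∫⁻ x, h x := by
  have hfr : Module.finrank ℝ E - 1 = m := by
    rw [finrank_euclideanSpace_fin]
    omega
  have hfr2 : Measure.volumeIoiPow m = Measure.volumeIoiPow (Module.finrank ℝ E - 1) :=
    congrArg Measure.volumeIoiPow hfr.symm
  have hg : Measurable fun q : sphere (0:E) 1 × Ioi (0:ℝ) => h ((q.2 : ℝ) • (q.1 : E)) :=
    hh.comp (((continuous_subtype_val.comp continuous_snd).smul
      (continuous_subtype_val.comp continuous_fst)) :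
        Continuous fun q : sphere (0:E) 1 × Ioi (0:ℝ) => (q.2 : ℝ) • (q.1 : E)).measurable
  have hid : ∀ z : ({(0:E)}ᶜ : Set E),
      ((homeomorphUnitSphereProd E z).2 : ℝ) • ((homeomorphUnitSphereProd E z).1 : E) = z := by
    intro z
    rw [← homeomorphUnitSphereProd_symm_apply_coe E (homeomorphUnitSphereProd E z),
      Homeomorph.symm_apply_apply]
  calc ∫⁻ ω : sphere (0:E) 1,
        (∫⁻ r in Ioi (0:ℝ), ENNReal.ofReal (r ^ m) * h (r • (ω : E)))
      ∂(volume : Measure E).toSphere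
      = ∫⁻ ω : sphere (0:E) 1, (∫⁻ r : Ioi (0:ℝ), h ((r : ℝ) • (ω : E))
          ∂(Measure.volumeIoiPow m)) ∂(volume : Measure E).toSphere := by
        refine lintegral_congr fun ω => ?_
        have hmf : Measurable fun r : Ioi (0:ℝ) => h ((r:ℝ) • (ω : E)) :=
          hh.comp (measurable_subtype_coe.smul_const _)
        rw [Measure.volumeIoiPow, lintegral_withDensity_eq_lintegral_mul _
          ((measurable_subtype_coe.pow_const _).ennreal_ofReal) hmf]
        rw [← lintegral_subtype_comap measurableSet_Ioi
          (fun r : ℝ => ENNReal.ofReal (r ^ m) * h (r • (ω : E)))]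
        exact lintegral_congr fun r => rfl
  _ = ∫⁻ q : sphere (0:E) 1 × Ioi (0:ℝ), h ((q.2 : ℝ) • (q.1 : E))
        ∂((volume : Measure E).toSphere.prod (Measure.volumeIoiPow m)) := by
        rw [lintegral_prod _ hg.aemeasurable]
  _ = ∫⁻ z : ({(0:E)}ᶜ : Set E), h z ∂(Measure.comap Subtype.val volume) := by
        rw [hfr2]
        rw [← (Measure.measurePreserving_homeomorphUnitSphereProd
          (volume : Measure E)).lintegral_comp hg]
        exact lintegral_congr fun z => by rw [hid z]
  _ = ∫⁻ x in {(0:E)}ᶜ, h x := lintegral_subtype_comap (measurableSet_singleton _).compl _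
  _ = ∫⁻ x, h x := by rw [MeasureTheory.restrict_compl_singleton]

/-- For `1 < p < ∞` and `α = n/p`, the operator
`B_α f(ω) = ∫₀^∞ f(tω) t^{α-1} dt` maps `L^{p,1}(ℝ^n)` boundedly to `L^p(S^{n-1})`:
`‖B_α f‖_{L^p(S^{n-1})} ≤ C ‖f‖_{L^{p,1}(ℝ^n)}` with `C` independent of `f`. -/
theorem radial_average_Lp_bound (n : ℕ) (p α : ℝ) (hp : 1 < p) (hα : α = n / p) :
    ∃ C : ℝ≥0∞, C < ⊤ ∧ ∀ f : EuclideanSpace ℝ (Fin n) → ℂ, Measurable f →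
      (∫⁻ ω : Metric.sphere (0 : EuclideanSpace ℝ (Fin n)) 1,
          (ENNReal.ofReal
              ‖∫ t in Ioi (0 : ℝ),
                  t ^ (α - 1) • f (t • (ω : EuclideanSpace ℝ (Fin n)))‖) ^ p
          ∂((volume : Measure (EuclideanSpace ℝ (Fin n))).toSphere)) ^ (1 / p)
        ≤ C * lorentzNorm₁ (volume : Measure (EuclideanSpace ℝ (Fin n))) p f := by
  have hp0 : (0:ℝ) < p := one_pos.trans hp
  rcases Nat.eq_zero_or_pos n with rfl | hn
  · refine ⟨1, ENNReal.one_lt_top, fun f hf => ?_⟩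
    haveI : IsEmpty (sphere (0 : EuclideanSpace ℝ (Fin 0)) 1) := by
      constructor
      rintro ⟨x, hx⟩
      rw [mem_sphere, Subsingleton.elim x (0 : EuclideanSpace ℝ (Fin 0)), dist_self] at hx
      norm_num at hx
    rw [Measure.eq_zero_of_isEmpty ((volume : Measure (EuclideanSpace ℝ (Fin 0))).toSphere),
      lintegral_zero_measure, ENNReal.zero_rpow_of_pos (by positivity)]
    exact zero_le
  obtain ⟨m, rfl⟩ : ∃ m, n = m + 1 := ⟨n - 1, (Nat.succ_pred_eq_of_pos hn).symm⟩
  have hα0 : 0 < α := by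
    rw [hα]
    positivity
  set C : ℝ≥0∞ := ENNReal.ofReal (1/α + 1) with hC
  have hCtop : C ≠ ⊤ := ENNReal.ofReal_ne_top
  refine ⟨C, ENNReal.ofReal_lt_top, fun f hf => ?_⟩
  set σ := (volume : Measure (EuclideanSpace ℝ (Fin (m+1)))).toSphere with hσ
  set w : ℝ → ℝ≥0∞ := fun t => ENNReal.ofReal (t ^ (α - 1)) with hw
  have hwm : Measurable w := (measurable_id.pow_const _).ennreal_ofReal
  set μw : Measure ℝ := (volume.restrict (Ioi 0)).withDensity w with hμw
  have hfsm : ∀ ω : sphere (0 : EuclideanSpace ℝ (Fin (m+1))) 1,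
      Measurable fun t : ℝ => f (t • (ω : EuclideanSpace ℝ (Fin (m+1)))) :=
    fun ω => hf.comp (measurable_id.smul_const _)
  set G : sphere (0 : EuclideanSpace ℝ (Fin (m+1))) 1 → ℝ → ℝ≥0∞ :=
    fun ω l => μw {t : ℝ | l < ‖f (t • (ω : EuclideanSpace ℝ (Fin (m+1))))‖} with hG
  have hAl : ∀ (ω : sphere (0 : EuclideanSpace ℝ (Fin (m+1))) 1) (l : ℝ),
      MeasurableSet {t : ℝ | l < ‖f (t • (ω : EuclideanSpace ℝ (Fin (m+1))))‖} :=
    fun ω l => measurableSet_lt measurable_const (hfsm ω).norm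
  -- Step 1: bound by the lintegral of norms
  have step1 : ∀ ω : sphere (0 : EuclideanSpace ℝ (Fin (m+1))) 1,
      ENNReal.ofReal ‖∫ t in Ioi (0:ℝ),
          t ^ (α - 1) • f (t • (ω : EuclideanSpace ℝ (Fin (m+1))))‖
        ≤ ∫⁻ t in Ioi (0:ℝ),
            w t * ↑‖f (t • (ω : EuclideanSpace ℝ (Fin (m+1))))‖₊ := by
    intro ω
    calc ENNReal.ofReal ‖∫ t in Ioi (0:ℝ),
            t ^ (α - 1) • f (t • (ω : EuclideanSpace ℝ (Fin (m+1))))‖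
        = ↑‖∫ t in Ioi (0:ℝ),
            t ^ (α - 1) • f (t • (ω : EuclideanSpace ℝ (Fin (m+1))))‖₊ :=
          ofReal_norm _
    _ ≤ ∫⁻ t in Ioi (0:ℝ),
          ↑‖t ^ (α - 1) • f (t • (ω : EuclideanSpace ℝ (Fin (m+1))))‖₊ :=
          enorm_integral_le_lintegral_enorm _
    _ = ∫⁻ t in Ioi (0:ℝ),
          w t * ↑‖f (t • (ω : EuclideanSpace ℝ (Fin (m+1))))‖₊ := by
          refine setLIntegral_congr_fun measurableSet_Ioi (fun t ht => ?_)
          rw [nnnorm_smul, ENNReal.coe_mul]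
          congr 1
          rw [← enorm_eq_nnnorm, ← ofReal_norm, Real.norm_eq_abs,
            abs_of_nonneg (Real.rpow_nonneg (le_of_lt ht) _)]
  -- Step 2: layer cake
  have step2 : ∀ ω : sphere (0 : EuclideanSpace ℝ (Fin (m+1))) 1,
      (∫⁻ t in Ioi (0:ℝ), w t * ↑‖f (t • (ω : EuclideanSpace ℝ (Fin (m+1))))‖₊)
        = ∫⁻ l in Ioi (0:ℝ), G ω l := by
    intro ω
    have h1 : ∫⁻ t, ↑‖f (t • (ω : EuclideanSpace ℝ (Fin (m+1))))‖₊ ∂μw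
        = ∫⁻ t in Ioi (0:ℝ), w t * ↑‖f (t • (ω : EuclideanSpace ℝ (Fin (m+1))))‖₊ := by
      rw [hμw, lintegral_withDensity_eq_lintegral_mul _ hwm
        ((hfsm ω).nnnorm.coe_nnreal_ennreal)]
      exact lintegral_congr fun t => rfl
    rw [← h1]
    have h2 := lintegral_eq_lintegral_meas_lt μw
      (f := fun t => ‖f (t • (ω : EuclideanSpace ℝ (Fin (m+1))))‖)
      (Filter.Eventually.of_forall fun t => norm_nonneg _) ((hfsm ω).norm.aemeasurable)
    rw [← h2]
    exact lintegral_congr fun t => (ofReal_norm _).symm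
  -- measurability of uncurry G
  have hGmeas : Measurable (Function.uncurry G) := by
    have hrepr : Function.uncurry G = fun z : (sphere (0 : EuclideanSpace ℝ (Fin (m+1))) 1) × ℝ =>
        ∫⁻ t, Set.indicator
          {q : ((sphere (0 : EuclideanSpace ℝ (Fin (m+1))) 1) × ℝ) × ℝ |
            q.1.2 < ‖f (q.2 • (q.1.1 : EuclideanSpace ℝ (Fin (m+1))))‖}
          (fun q => w q.2) (z, t) ∂(volume.restrict (Ioi 0)) := by
      funext z
      show μw {t : ℝ | z.2 < ‖f (t • (z.1 : EuclideanSpace ℝ (Fin (m+1))))‖} = _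
      rw [hμw, withDensity_apply _ (hAl z.1 z.2), ← lintegral_indicator (hAl z.1 z.2)]
      refine lintegral_congr fun t => ?_
      simp only [Set.indicator_apply, Set.mem_setOf_eq]
    rw [hrepr]
    refine Measurable.lintegral_prod_right ?_
    refine Measurable.indicator (hwm.comp measurable_snd) ?_
    refine measurableSet_lt (measurable_snd.comp measurable_fst) ?_
    refine (hf.comp ?_).norm
    exact (continuous_snd.smul
      (continuous_subtype_val.comp (continuous_fst.comp continuous_fst))).measurable
  -- Step 4: fixed level set bound
  have step4 : ∀ l : ℝ, (∫⁻ ω, (G ω l) ^ p ∂σ) ^ (1/p) ≤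
      C * (volume {x : EuclideanSpace ℝ (Fin (m+1)) | l < ‖f x‖}) ^ (1/p) := by
    intro l
    have hSl : MeasurableSet {x : EuclideanSpace ℝ (Fin (m+1)) | l < ‖f x‖} :=
      measurableSet_lt measurable_const hf.norm
    have hω : ∀ ω : sphere (0 : EuclideanSpace ℝ (Fin (m+1))) 1, (G ω l) ^ p ≤ C ^ p *
        (∫⁻ t in Ioi (0:ℝ), ENNReal.ofReal (t ^ m) *
          Set.indicator {x : EuclideanSpace ℝ (Fin (m+1)) | l < ‖f x‖} (fun _ => 1)
            (t • (ω : EuclideanSpace ℝ (Fin (m+1))))) := by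
      intro ω
      have hA : MeasurableSet
          ({t : ℝ | l < ‖f (t • (ω : EuclideanSpace ℝ (Fin (m+1))))‖} ∩ Ioi 0) :=
        (hAl ω l).inter measurableSet_Ioi
      have hGval : G ω l =
          ∫⁻ t in {t : ℝ | l < ‖f (t • (ω : EuclideanSpace ℝ (Fin (m+1))))‖} ∩ Ioi 0, w t := by
        show μw _ = _
        rw [hμw, withDensity_apply _ (hAl ω l), Measure.restrict_restrict (hAl ω l)]
      have hkey := keyA (Nat.succ_pos m) hp hα hA inter_subset_right
      have h2 : (G ω l) ^ p ≤ (C *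
          (∫⁻ t in {t : ℝ | l < ‖f (t • (ω : EuclideanSpace ℝ (Fin (m+1))))‖} ∩ Ioi 0,
            ENNReal.ofReal (t ^ (((m+1:ℕ):ℝ) - 1))) ^ (1/p)) ^ p := by
        refine ENNReal.rpow_le_rpow ?_ hp0.le
        rw [hGval]
        exact hkey
      rw [ENNReal.mul_rpow_of_nonneg _ _ hp0.le, ← ENNReal.rpow_mul,
        one_div_mul_cancel hp0.ne', ENNReal.rpow_one] at h2
      refine h2.trans (mul_le_mul_right (le_of_eq ?_) _)
      rw [← Measure.restrict_restrict (hAl ω l), ← withDensity_apply _ (hAl ω l)]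
      -- now LHS is a withDensity measure applied to the superlevel set
      rw [withDensity_apply _ (hAl ω l), ← lintegral_indicator (hAl ω l)]
      refine setLIntegral_congr_fun measurableSet_Ioi (fun t ht => ?_)
      simp only [Set.indicator_apply, Set.mem_setOf_eq, mul_ite, mul_one, mul_zero]
      by_cases hmem : l < ‖f (t • (ω : EuclideanSpace ℝ (Fin (m+1))))‖
      · simp only [hmem, if_true]
        rw [show ((m+1:ℕ):ℝ) - 1 = (m:ℝ) by push_cast; ring, Real.rpow_natCast]
      · simp only [hmem, if_false]
    have hCp : C ^ p ≠ ⊤ := (ENNReal.rpow_lt_top_of_nonneg hp0.le hCtop).ne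
    have h3 : ∫⁻ ω, (G ω l) ^ p ∂σ ≤
        C ^ p * volume {x : EuclideanSpace ℝ (Fin (m+1)) | l < ‖f x‖} := by
      calc ∫⁻ ω, (G ω l) ^ p ∂σ
          ≤ ∫⁻ ω, C ^ p * (∫⁻ t in Ioi (0:ℝ), ENNReal.ofReal (t ^ m) *
              Set.indicator {x : EuclideanSpace ℝ (Fin (m+1)) | l < ‖f x‖} (fun _ => 1)
                (t • (ω : EuclideanSpace ℝ (Fin (m+1))))) ∂σ := lintegral_mono hω
      _ = C ^ p * ∫⁻ ω, (∫⁻ t in Ioi (0:ℝ), ENNReal.ofReal (t ^ m) *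
              Set.indicator {x : EuclideanSpace ℝ (Fin (m+1)) | l < ‖f x‖} (fun _ => 1)
                (t • (ω : EuclideanSpace ℝ (Fin (m+1))))) ∂σ :=
            lintegral_const_mul' _ _ hCp
      _ = C ^ p * volume {x : EuclideanSpace ℝ (Fin (m+1)) | l < ‖f x‖} := by
            rw [polar_lintegral _ (measurable_const.indicator hSl),
              lintegral_indicator hSl, setLIntegral_one]
    calc (∫⁻ ω, (G ω l) ^ p ∂σ) ^ (1/p)
        ≤ (C ^ p * volume {x : EuclideanSpace ℝ (Fin (m+1)) | l < ‖f x‖}) ^ (1/p) :=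
          ENNReal.rpow_le_rpow h3 (by positivity)
    _ = C * (volume {x : EuclideanSpace ℝ (Fin (m+1)) | l < ‖f x‖}) ^ (1/p) := by
          rw [ENNReal.mul_rpow_of_nonneg _ _ (by positivity), ← ENNReal.rpow_mul,
            mul_one_div_cancel hp0.ne', ENNReal.rpow_one]
  -- assemble
  calc (∫⁻ ω : sphere (0 : EuclideanSpace ℝ (Fin (m+1))) 1,
          (ENNReal.ofReal ‖∫ t in Ioi (0:ℝ),
            t ^ (α - 1) • f (t • (ω : EuclideanSpace ℝ (Fin (m+1))))‖) ^ p ∂σ) ^ (1/p)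
      ≤ (∫⁻ ω, (∫⁻ l in Ioi (0:ℝ), G ω l) ^ p ∂σ) ^ (1/p) := by
        refine ENNReal.rpow_le_rpow (lintegral_mono fun ω => ?_) (by positivity)
        refine ENNReal.rpow_le_rpow ?_ hp0.le
        rw [← step2 ω]
        exact step1 ω
  _ ≤ ∫⁻ l in Ioi (0:ℝ), (∫⁻ ω, (G ω l) ^ p ∂σ) ^ (1/p) :=
        minkowski_lintegral σ hp hGmeas
  _ ≤ ∫⁻ l in Ioi (0:ℝ),
        C * (volume {x : EuclideanSpace ℝ (Fin (m+1)) | l < ‖f x‖}) ^ (1/p) :=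
        lintegral_mono fun l => step4 l
  _ = C * lorentzNorm₁ (volume : Measure (EuclideanSpace ℝ (Fin (m+1)))) p f := by
        rw [lorentzNorm₁, lintegral_const_mul' _ _ hCtop]
end

section
/- Let n ≥ 2, 1 < α < n, and let g : S^{n-1} → C be a measurable function satisfying g(cos t, (sin t)ω̃) = g(0, ω̃) for all 0 ≤ t ≤ π and ω̃ ∈ S^{n-2}. Then the function ω ↦ |ω'|^{α-n} g(ω) (where ω = (ω^{(1)}, ω') with ω' ∈ R^{n-1}) belongs to weak-L^{(n-1)/(n-α)}(S^{n-1}) with ‖ |ω'|^{α-n} g(ω) ‖_{L^{(n-1)/(n-α),∞}(S^{n-1})} ≤ C ( ∫_{S^{n-2}} |g(0,ω̃)|^{(n-1)/(n-α)} dω̃ )^{(n-α)/(n-1)}. -/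
open MeasureTheory Metric Set Real
open scoped ENNReal Pointwise

set_option maxHeartbeats 1000000

/-- The last `m` coordinates of a vector in `ℝ^{m+1}`. -/
def euclideanTail (m : ℕ) (ω : EuclideanSpace ℝ (Fin (m + 1))) :
    EuclideanSpace ℝ (Fin m) := WithLp.toLp 2 (fun i : Fin m => ω i.succ)

lemma tail_norm_sq (m : ℕ) (x : EuclideanSpace ℝ (Fin (m + 1))) :
    ‖x‖ ^ 2 = (x 0) ^ 2 + ‖euclideanTail m x‖ ^ 2 := by
  rw [← Real.sq_sqrt (by positivity : (0:ℝ) ≤ (x 0)^2 + ‖euclideanTail m x‖^2)]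
  congr 1
  rw [EuclideanSpace.norm_eq, EuclideanSpace.norm_eq]
  rw [Real.sq_sqrt (by positivity)]
  rw [Fin.sum_univ_succ]
  simp [euclideanTail, sq_abs]

lemma g_radial (m : ℕ) (g : EuclideanSpace ℝ (Fin (m + 1)) → ℂ)
    (hsym : ∀ t ∈ Icc (0 : ℝ) π, ∀ ω' : EuclideanSpace ℝ (Fin m), ‖ω'‖ = 1 →
        g (WithLp.toLp 2 (Fin.cons (Real.cos t) (fun i => Real.sin t * ω' i) : Fin (m + 1) → ℝ)) =
          g (WithLp.toLp 2 (Fin.cons 0 (fun i => ω' i) : Fin (m + 1) → ℝ)))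
    (ω : EuclideanSpace ℝ (Fin (m + 1))) (hω : ‖ω‖ = 1)
    (hne : euclideanTail m ω ≠ 0) :
    g ω = g (WithLp.toLp 2 (Fin.cons 0 (fun i =>
      (‖euclideanTail m ω‖⁻¹ • euclideanTail m ω : EuclideanSpace ℝ (Fin m)) i) : Fin (m + 1) → ℝ)) := by
  set w : EuclideanSpace ℝ (Fin m) := euclideanTail m ω with hw
  have hwpos : 0 < ‖w‖ := norm_pos_iff.2 hne
  set θ : EuclideanSpace ℝ (Fin m) := ‖w‖⁻¹ • w with hθ
  have hθ1 : ‖θ‖ = 1 := by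
    rw [hθ, norm_smul, norm_inv, norm_norm, inv_mul_cancel₀ hwpos.ne']
  have hsq : (ω 0) ^ 2 + ‖w‖ ^ 2 = 1 := by
    rw [← tail_norm_sq, hω]; norm_num
  have h0le : (ω 0) ^ 2 ≤ 1 := by nlinarith [sq_nonneg ‖w‖]
  have h1 : -1 ≤ ω 0 := by nlinarith
  have h2 : ω 0 ≤ 1 := by nlinarith
  have key : WithLp.toLp 2 (Fin.cons (Real.cos (Real.arccos (ω 0)))
      (fun i => Real.sin (Real.arccos (ω 0)) * θ i) : Fin (m + 1) → ℝ) = ω := by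
    have hc : Real.cos (Real.arccos (ω 0)) = ω 0 := Real.cos_arccos h1 h2
    have hs : Real.sin (Real.arccos (ω 0)) = ‖w‖ := by
      rw [Real.sin_arccos]
      rw [show (1 : ℝ) - ω 0 ^ 2 = ‖w‖ ^ 2 by linarith]
      exact Real.sqrt_sq hwpos.le
    ext i
    refine Fin.cases ?_ (fun j => ?_) i
    · simpa using hc
    · simp only [Fin.cons_succ, hs, hθ]
      have : (‖w‖⁻¹ • w : EuclideanSpace ℝ (Fin m)) j = ‖w‖⁻¹ * w j := rfl
      rw [this, ← mul_assoc, mul_inv_cancel₀ hwpos.ne', one_mul]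
      rfl
  rw [← key]
  exact hsym _ ⟨Real.arccos_nonneg _, Real.arccos_le_pi _⟩ θ hθ1

lemma measurable_cons0 (m : ℕ) : Measurable
    (fun θ : EuclideanSpace ℝ (Fin m) =>
      (WithLp.toLp 2 (Fin.cons 0 (fun i => θ i) : Fin (m+1) → ℝ) : EuclideanSpace ℝ (Fin (m+1)))) := by
  refine (WithLp.measurable_toLp 2 _).comp ?_
  apply measurable_pi_lambda
  intro i
  refine Fin.cases ?_ (fun j => ?_) i
  · simp only [Fin.cons_zero]; exact measurable_const
  · simp only [Fin.cons_succ]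
    exact (measurable_pi_apply j).comp (WithLp.measurable_ofLp 2 _)

lemma measurable_tail (m : ℕ) : Measurable (euclideanTail m) := by
  refine (WithLp.measurable_toLp 2 _).comp ?_
  apply measurable_pi_lambda
  intro i
  exact (measurable_pi_apply i.succ).comp (WithLp.measurable_ofLp 2 _)

lemma vol_T (m : ℕ) (B : Set (EuclideanSpace ℝ (Fin m))) (hB : MeasurableSet B) :
    volume {x : EuclideanSpace ℝ (Fin (m+1)) |
        x 0 ∈ Icc (-1:ℝ) 1 ∧ euclideanTail m x ∈ B}
      = ENNReal.ofReal 2 * volume B := by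
  set e1 := (MeasurableEquiv.toLp 2 (Fin (m+1) → ℝ)).symm
  set e0 := (MeasurableEquiv.toLp 2 (Fin m → ℝ)).symm
  set π0 := MeasurableEquiv.piFinSuccAbove (fun _ : Fin (m+1) => ℝ) 0
  have hT : {x : EuclideanSpace ℝ (Fin (m+1)) |
        x 0 ∈ Icc (-1:ℝ) 1 ∧ euclideanTail m x ∈ B}
      = e1 ⁻¹' (π0 ⁻¹' (Icc (-1:ℝ) 1 ×ˢ (e0.symm ⁻¹' B))) := by
    ext x
    simp only [mem_preimage, mem_prod, mem_setOf_eq]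
    constructor
    · rintro ⟨h1, h2⟩; exact ⟨h1, h2⟩
    · rintro ⟨h1, h2⟩; exact ⟨h1, h2⟩
  rw [hT]
  have hmeas : MeasurableSet (Icc (-1:ℝ) 1 ×ˢ (e0.symm ⁻¹' B)) :=
    measurableSet_Icc.prod (e0.symm.measurable hB)
  rw [(EuclideanSpace.volume_preserving_symm_measurableEquiv_toLp (Fin (m+1))).measure_preimage
    ((π0.measurable hmeas).nullMeasurableSet)]
  have hπ : MeasurePreserving π0 volume (volume.prod volume) := by
    have := measurePreserving_piFinSuccAbove (fun _ : Fin (m+1) => (volume : Measure ℝ)) 0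
    simpa [MeasureTheory.volume_pi, π0] using this
  rw [hπ.measure_preimage hmeas.nullMeasurableSet]
  rw [Measure.prod_prod]
  congr 1
  · simp [Real.volume_Icc]; norm_num
  · exact ((EuclideanSpace.volume_preserving_symm_measurableEquiv_toLp (Fin m)).symm
      _).measure_preimage hB.nullMeasurableSet

lemma slice_bound (k : ℕ) (ρ : ℝ) (hρ : 0 ≤ ρ) :
    Measure.volumeIoiPow k {s : Ioi (0:ℝ) | (s : ℝ) < 1 ∧ (s : ℝ) < ρ}
      ≤ ENNReal.ofReal (ρ ^ (k+1) / (k+1)) := by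
  rcases eq_or_lt_of_le hρ with h0 | h0
  · have : {s : Ioi (0:ℝ) | (s : ℝ) < 1 ∧ (s : ℝ) < ρ} = ∅ := by
      ext s; simp only [mem_setOf_eq, mem_empty_iff_false, iff_false, not_and]
      intro _; rw [← h0]; exact not_lt.2 s.2.le
    simp [this]
  · calc Measure.volumeIoiPow k {s : Ioi (0:ℝ) | (s : ℝ) < 1 ∧ (s : ℝ) < ρ}
        ≤ Measure.volumeIoiPow k (Iio ⟨ρ, h0⟩) := by
          apply measure_mono
          intro s hs
          exact (Subtype.coe_lt_coe (y := (⟨ρ, h0⟩ : Ioi (0:ℝ)))).1 hs.2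
      _ = ENNReal.ofReal (ρ ^ (k+1) / (k+1)) := by
          rw [Measure.volumeIoiPow_apply_Iio]

lemma vol_B (k : ℕ) (R : EuclideanSpace ℝ (Fin (k+1)) → ℝ) (hR : Measurable R)
    (hR0 : ∀ x, 0 ≤ R x) :
    volume {x : EuclideanSpace ℝ (Fin (k+1)) |
        0 < ‖x‖ ∧ ‖x‖ < 1 ∧ ‖x‖ < R (‖x‖⁻¹ • x)} ≤
      ∫⁻ θ : sphere (0 : EuclideanSpace ℝ (Fin (k+1))) 1,
        ENNReal.ofReal ((R θ) ^ (k+1) / (k+1))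
        ∂((volume : Measure (EuclideanSpace ℝ (Fin (k+1)))).toSphere) := by
  set B : Set (EuclideanSpace ℝ (Fin (k+1))) :=
    {x | 0 < ‖x‖ ∧ ‖x‖ < 1 ∧ ‖x‖ < R (‖x‖⁻¹ • x)} with hBdef
  set A : Set (sphere (0 : EuclideanSpace ℝ (Fin (k+1))) 1 × Ioi (0:ℝ)) :=
    {p | (p.2 : ℝ) < 1 ∧ (p.2 : ℝ) < R p.1} with hAdef
  have hA : MeasurableSet A := by
    apply MeasurableSet.inter
    · exact measurableSet_lt (measurable_subtype_coe.comp measurable_snd) measurable_const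
    · exact measurableSet_lt (measurable_subtype_coe.comp measurable_snd)
        (by exact hR.comp (measurable_subtype_coe.comp measurable_fst))
  have hBsub : B ⊆ ({0}ᶜ : Set (EuclideanSpace ℝ (Fin (k+1)))) := fun x hx => by
    simp only [mem_compl_iff, mem_singleton_iff]
    exact norm_pos_iff.1 hx.1
  have key : volume B = ((volume : Measure (EuclideanSpace ℝ (Fin (k+1)))).toSphere.prod
      (Measure.volumeIoiPow (Module.finrank ℝ (EuclideanSpace ℝ (Fin (k+1))) - 1))) A := by
    have h1 : volume B = ((volume : Measure (EuclideanSpace ℝ (Fin (k+1)))).comap (↑))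
        ((Subtype.val : ({0}ᶜ : Set (EuclideanSpace ℝ (Fin (k+1)))) → _) ⁻¹' B) := by
      rw [comap_subtype_coe_apply
          (measurableSet_singleton (0 : EuclideanSpace ℝ (Fin (k+1)))).compl,
        Subtype.image_preimage_coe, inter_eq_self_of_subset_right hBsub]
    have h2 : (Subtype.val : ({0}ᶜ : Set (EuclideanSpace ℝ (Fin (k+1)))) → _) ⁻¹' B
        = (homeomorphUnitSphereProd (EuclideanSpace ℝ (Fin (k+1)))) ⁻¹' A := by
      ext x
      have hx : (x : EuclideanSpace ℝ (Fin (k+1))) ≠ 0 := x.2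
      have hxn : 0 < ‖(x : EuclideanSpace ℝ (Fin (k+1)))‖ := norm_pos_iff.2 hx
      simp only [mem_preimage, hBdef, hAdef, mem_setOf_eq,
        homeomorphUnitSphereProd_apply_snd_coe, homeomorphUnitSphereProd_apply_fst_coe, one_smul, div_one]
      constructor
      · rintro ⟨-, h1', h2'⟩
        exact ⟨h1', h2'⟩
      · rintro ⟨h1', h2'⟩
        exact ⟨hxn, h1', h2'⟩
    rw [h1, h2,
      ((volume : Measure (EuclideanSpace ℝ (Fin (k+1)))).measurePreserving_homeomorphUnitSphereProd).measure_preimage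
        hA.nullMeasurableSet]
  rw [show volume {x : EuclideanSpace ℝ (Fin (k+1)) |
        0 < ‖x‖ ∧ ‖x‖ < 1 ∧ ‖x‖ < R (‖x‖⁻¹ • x)} = volume B from rfl,
    key, Measure.prod_apply hA]
  have hfr : Module.finrank ℝ (EuclideanSpace ℝ (Fin (k+1))) - 1 = k := by
    simp [finrank_euclideanSpace_fin]
  rw [hfr]
  apply lintegral_mono
  intro θ
  show Measure.volumeIoiPow k (Prod.mk θ ⁻¹' A) ≤ _
  have : (Prod.mk θ ⁻¹' A) = {s : Ioi (0:ℝ) | (s : ℝ) < 1 ∧ (s : ℝ) < R θ} := rfl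
  rw [this]
  exact slice_bound k (R θ) (hR0 θ)

/-- Let `n = m+1 ≥ 2`, `1 < α < n`, and let `g` on `S^{n-1}` satisfy
`g(cos t, (sin t)ω̃) = g(0, ω̃)`. Then `ω ↦ |ω'|^{α-n} g(ω)` lies in weak
`L^{(n-1)/(n-α)}(S^{n-1})` with norm at most
`C (∫_{S^{n-2}} |g(0,ω̃)|^{(n-1)/(n-α)} dω̃)^{(n-α)/(n-1)}`, `C = C(n,α)`. -/
theorem weak_bound_for_radial_extension (m : ℕ) (hm : 1 ≤ m) (α : ℝ)
    (hα1 : 1 < α) (hαn : α < (m : ℝ) + 1) :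
    ∃ C : ℝ≥0∞, C < ⊤ ∧
      ∀ g : EuclideanSpace ℝ (Fin (m + 1)) → ℂ, Measurable g →
      (∀ t ∈ Icc (0 : ℝ) π, ∀ ω' : EuclideanSpace ℝ (Fin m), ‖ω'‖ = 1 →
        g (WithLp.toLp 2 (Fin.cons (Real.cos t) (fun i => Real.sin t * ω' i) : Fin (m + 1) → ℝ)) =
          g (WithLp.toLp 2 (Fin.cons 0 (fun i => ω' i) : Fin (m + 1) → ℝ))) →
      ∀ l : ℝ, 0 < l →
        ENNReal.ofReal l *
            ((volume : Measure (EuclideanSpace ℝ (Fin (m + 1)))).toSphere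
              {ω : Metric.sphere (0 : EuclideanSpace ℝ (Fin (m + 1))) 1 |
                l < ‖euclideanTail m (ω : EuclideanSpace ℝ (Fin (m + 1)))‖
                      ^ (α - ((m : ℝ) + 1)) *
                    ‖g (ω : EuclideanSpace ℝ (Fin (m + 1)))‖})
              ^ (((m : ℝ) + 1 - α) / m)
          ≤ C * (∫⁻ ω' : Metric.sphere (0 : EuclideanSpace ℝ (Fin m)) 1,
                ENNReal.ofReal
                    ‖g (WithLp.toLp 2 (Fin.cons 0 (fun i => (ω' : EuclideanSpace ℝ (Fin m)) i) : Fin (m + 1) → ℝ))‖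
                  ^ ((m : ℝ) / ((m : ℝ) + 1 - α))
                ∂((volume : Measure (EuclideanSpace ℝ (Fin m))).toSphere))
              ^ (((m : ℝ) + 1 - α) / m) := by
  obtain ⟨k, rfl⟩ : ∃ k, m = k + 1 := ⟨m - 1, by omega⟩
  set δ : ℝ := ((k + 1 : ℕ) : ℝ) + 1 - α with hδdef
  have hδ : 0 < δ := by
    have : α < ((k + 1 : ℕ) : ℝ) + 1 := hαn
    simp only [hδdef]; linarith
  have hm1 : (0:ℝ) < ((k + 1 : ℕ) : ℝ) := by positivity
  set p : ℝ := ((k + 1 : ℕ) : ℝ) / δ with hpdef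
  set q : ℝ := δ / ((k + 1 : ℕ) : ℝ) with hqdef
  have hp : 0 < p := div_pos hm1 hδ
  have hq : 0 < q := div_pos hδ hm1
  have hpq : p * q = 1 := by
    rw [hpdef, hqdef]; field_simp
  set K2 : ℝ≥0∞ := ENNReal.ofReal ((k : ℝ) + 1) with hK2def
  have hK2pos : (0:ℝ) < (k : ℝ) + 1 := by positivity
  set N : ℝ≥0∞ := ((k + 1 + 1 : ℕ) : ℝ≥0∞) * ENNReal.ofReal 2 with hNdef
  have hNtop : N ≠ ⊤ := by
    rw [hNdef]; exact ENNReal.mul_ne_top (ENNReal.natCast_ne_top _) ENNReal.ofReal_ne_top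
  refine ⟨N ^ q * (K2 ^ q)⁻¹, ?_, ?_⟩
  · apply ENNReal.mul_lt_top
    · exact ENNReal.rpow_lt_top_of_nonneg hq.le hNtop
    · rw [lt_top_iff_ne_top]
      exact ENNReal.inv_ne_top.2
        (ENNReal.rpow_pos (ENNReal.ofReal_pos.2 hK2pos) ENNReal.ofReal_ne_top).ne'
  intro g hg hsym l hl
  set G : EuclideanSpace ℝ (Fin (k+1)) → ℝ :=
    fun y => ‖g (WithLp.toLp 2 (Fin.cons 0 (fun i => y i) : Fin (k + 1 + 1) → ℝ))‖ with hGdef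
  have hGmeas : Measurable G := (hg.comp (measurable_cons0 (k+1))).norm
  have hG0 : ∀ y, 0 ≤ G y := fun y => norm_nonneg _
  set R : EuclideanSpace ℝ (Fin (k+1)) → ℝ := fun y => (G y / l) ^ (1/δ) with hRdef
  have hRmeas : Measurable R := by
    have h1 : Measurable (fun x : ℝ => x ^ (1/δ)) := by fun_prop
    exact h1.comp (hGmeas.div_const l)
  have hR0 : ∀ y, 0 ≤ R y := fun y =>
    Real.rpow_nonneg (div_nonneg (hG0 y) hl.le) _
  set S : Set (Metric.sphere (0 : EuclideanSpace ℝ (Fin (k + 1 + 1))) 1) :=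
    {ω | l < ‖euclideanTail (k+1) (ω : EuclideanSpace ℝ (Fin (k + 1 + 1)))‖
          ^ (α - (((k+1 : ℕ) : ℝ) + 1)) *
        ‖g (ω : EuclideanSpace ℝ (Fin (k + 1 + 1)))‖} with hSdef
  have hS : MeasurableSet S := by
    apply measurableSet_lt measurable_const
    apply Measurable.mul
    · have h1 : Measurable (fun x : ℝ => x ^ (α - (((k+1:ℕ):ℝ) + 1))) := by fun_prop
      exact h1.comp ((measurable_tail (k+1)).norm.comp measurable_subtype_coe)
    · exact (hg.comp measurable_subtype_coe).norm
  set B : Set (EuclideanSpace ℝ (Fin (k+1))) :=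
    {x | 0 < ‖x‖ ∧ ‖x‖ < 1 ∧ ‖x‖ < R (‖x‖⁻¹ • x)} with hBdef
  have hB : MeasurableSet B := by
    apply MeasurableSet.inter
    · exact measurableSet_lt measurable_const measurable_norm
    apply MeasurableSet.inter
    · exact measurableSet_lt measurable_norm measurable_const
    · exact measurableSet_lt measurable_norm
        (hRmeas.comp ((measurable_norm.inv).smul measurable_id))
  -- the inclusion of the cone into the product-like set
  have hincl : Ioo (0:ℝ) 1 • ((↑) '' S) ⊆
      {x : EuclideanSpace ℝ (Fin (k+1+1)) |
        x 0 ∈ Icc (-1:ℝ) 1 ∧ euclideanTail (k+1) x ∈ B} := by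
    intro x hx
    rw [Set.mem_smul] at hx
    obtain ⟨c, hc, y, ⟨ω, hωS, rfl⟩, rfl⟩ := hx
    obtain ⟨hc0, hc1⟩ := hc
    have hω1 : ‖(ω : EuclideanSpace ℝ (Fin (k+1+1)))‖ = 1 :=
      mem_sphere_zero_iff_norm.1 ω.2
    set w := euclideanTail (k+1) (ω : EuclideanSpace ℝ (Fin (k+1+1))) with hwdef
    have hcond : l < ‖w‖ ^ (α - (((k+1:ℕ):ℝ) + 1)) *
        ‖g (ω : EuclideanSpace ℝ (Fin (k+1+1)))‖ := hωS
    have hsq : ((ω : EuclideanSpace ℝ (Fin (k+1+1))) 0) ^ 2 + ‖w‖ ^ 2 = 1 := by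
      rw [← tail_norm_sq, hω1]; norm_num
    have hαδ : α - (((k+1:ℕ):ℝ) + 1) = -δ := by rw [hδdef]; ring
    have hwne : w ≠ 0 := by
      intro h0
      rw [h0] at hcond
      rw [norm_zero, hαδ, Real.zero_rpow (by linarith : -δ ≠ 0), zero_mul] at hcond
      linarith
    have hwpos : 0 < ‖w‖ := norm_pos_iff.2 hwne
    have hwle : ‖w‖ ≤ 1 := by nlinarith [sq_nonneg ((ω : EuclideanSpace ℝ (Fin (k+1+1))) 0)]
    constructor
    · -- first coordinate in [-1,1]
      have hx0 : (c • (ω : EuclideanSpace ℝ (Fin (k+1+1)))) 0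
          = c * (ω : EuclideanSpace ℝ (Fin (k+1+1))) 0 := rfl
      have hb1 : -1 ≤ (ω : EuclideanSpace ℝ (Fin (k+1+1))) 0 := by nlinarith [sq_nonneg ‖w‖]
      have hb2 : (ω : EuclideanSpace ℝ (Fin (k+1+1))) 0 ≤ 1 := by nlinarith [sq_nonneg ‖w‖]
      rw [hx0]
      constructor <;> nlinarith
    · -- tail in B
      have htail : euclideanTail (k+1) (c • (ω : EuclideanSpace ℝ (Fin (k+1+1))))
          = c • w := rfl
      have hnorm : ‖c • w‖ = c * ‖w‖ := by
        rw [norm_smul, Real.norm_eq_abs, abs_of_pos hc0]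
      have hdir : ‖c • w‖⁻¹ • (c • w) = ‖w‖⁻¹ • w := by
        rw [hnorm, smul_smul]
        congr 1
        field_simp
      rw [htail, hBdef]
      refine ⟨by rw [hnorm]; positivity, ?_, ?_⟩
      · rw [hnorm]; nlinarith
      · rw [hdir, hnorm]
        -- key: ‖w‖ < R (‖w‖⁻¹ • w)
        have hg_eq : g (ω : EuclideanSpace ℝ (Fin (k+1+1)))
            = g (WithLp.toLp 2 (Fin.cons 0 (fun i =>
                (‖w‖⁻¹ • w : EuclideanSpace ℝ (Fin (k+1))) i) : Fin (k + 1 + 1) → ℝ)) :=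
          g_radial (k+1) g hsym _ hω1 hwne
        have hGθ : l < ‖w‖ ^ (-δ) * G (‖w‖⁻¹ • w) := by
          rw [hGdef]
          rw [hαδ] at hcond
          exact lt_of_lt_of_le hcond (by rw [hg_eq])
        have hu : 0 < ‖w‖ ^ δ := Real.rpow_pos_of_pos hwpos δ
        have h2 : ‖w‖ ^ δ < G (‖w‖⁻¹ • w) / l := by
          rw [Real.rpow_neg hwpos.le] at hGθ
          rw [lt_div_iff₀ hl]
          have := (lt_div_iff₀ hu).1 (by rwa [div_eq_inv_mul] : l < G (‖w‖⁻¹ • w) / ‖w‖ ^ δ)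
          nlinarith
        have h3 : ‖w‖ < R (‖w‖⁻¹ • w) := by
          have h4 : (‖w‖ ^ δ) ^ (1/δ) < (G (‖w‖⁻¹ • w) / l) ^ (1/δ) :=
            Real.rpow_lt_rpow hu.le h2 (by positivity)
          rwa [← Real.rpow_mul hwpos.le, mul_one_div, div_self hδ.ne',
            Real.rpow_one] at h4
        nlinarith
  -- now the measure estimates
  set σ' := ((volume : Measure (EuclideanSpace ℝ (Fin (k+1)))).toSphere) with hσ'def
  set I : ℝ≥0∞ := ∫⁻ θ : Metric.sphere (0 : EuclideanSpace ℝ (Fin (k+1))) 1,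
      ENNReal.ofReal (G θ) ^ p ∂σ' with hIdef
  set D : ℝ≥0∞ := ENNReal.ofReal (l ^ p * ((k : ℝ) + 1)) with hDdef
  have hDpos : (0:ℝ) < l ^ p * ((k : ℝ) + 1) := by positivity
  have hD0 : D ≠ 0 := by
    rw [hDdef]; exact (ENNReal.ofReal_pos.2 hDpos).ne'
  -- pointwise identity for the integrand
  have hpt : ∀ θ : Metric.sphere (0 : EuclideanSpace ℝ (Fin (k+1))) 1,
      ENNReal.ofReal ((R θ) ^ (k+1) / (k+1)) = ENNReal.ofReal (G θ) ^ p * D⁻¹ := by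
    intro θ
    have hGθ0 : 0 ≤ G θ := hG0 _
    have e1 : (R (θ : EuclideanSpace ℝ (Fin (k+1)))) ^ (k+1) = (G θ / l) ^ p := by
      rw [hRdef]
      rw [← Real.rpow_natCast ((G (θ : EuclideanSpace ℝ (Fin (k+1))) / l) ^ (1/δ)) (k+1),
        ← Real.rpow_mul (div_nonneg hGθ0 hl.le)]
      congr 1
      rw [hpdef]
      push_cast
      ring
    have e2 : (G θ / l) ^ p = G θ ^ p / l ^ p := Real.div_rpow hGθ0 hl.le p
    have e3 : (R (θ : EuclideanSpace ℝ (Fin (k+1)))) ^ (k+1) / ((k:ℝ)+1)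
        = G θ ^ p / (l ^ p * ((k : ℝ) + 1)) := by
      rw [e1, e2, div_div]
    rw [show ((R θ) ^ (k+1) / (k+1) : ℝ) = (R θ) ^ (k+1) / ((k:ℝ)+1) by push_cast; ring,
      e3, ENNReal.ofReal_div_of_pos hDpos, ENNReal.div_eq_inv_mul,
      ENNReal.ofReal_rpow_of_nonneg hGθ0 hp.le, hDdef, mul_comm]
  have hvolB : volume B ≤ I * D⁻¹ := by
    calc volume B ≤ ∫⁻ θ : Metric.sphere (0 : EuclideanSpace ℝ (Fin (k+1))) 1,
          ENNReal.ofReal ((R θ) ^ (k+1) / (k+1)) ∂σ' := vol_B k R hRmeas hR0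
      _ = ∫⁻ θ : Metric.sphere (0 : EuclideanSpace ℝ (Fin (k+1))) 1,
          ENNReal.ofReal (G θ) ^ p * D⁻¹ ∂σ' := lintegral_congr hpt
      _ = I * D⁻¹ := lintegral_mul_const' _ _ (ENNReal.inv_ne_top.2 hD0)
  have hσS : (volume : Measure (EuclideanSpace ℝ (Fin (k+1+1)))).toSphere S
      ≤ N * (I * D⁻¹) := by
    rw [Measure.toSphere_apply' _ hS, finrank_euclideanSpace_fin]
    calc ((k+1+1 : ℕ) : ℝ≥0∞) * volume (Ioo (0:ℝ) 1 • (Subtype.val '' S))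
        ≤ ((k+1+1 : ℕ) : ℝ≥0∞) * volume {x : EuclideanSpace ℝ (Fin (k+1+1)) |
            x 0 ∈ Icc (-1:ℝ) 1 ∧ euclideanTail (k+1) x ∈ B} :=
          mul_le_mul_right (measure_mono hincl) _
      _ = ((k+1+1 : ℕ) : ℝ≥0∞) * (ENNReal.ofReal 2 * volume B) := by
          rw [vol_T (k+1) B hB]
      _ ≤ ((k+1+1 : ℕ) : ℝ≥0∞) * (ENNReal.ofReal 2 * (I * D⁻¹)) :=
          mul_le_mul_right (mul_le_mul_right hvolB _) _
      _ = N * (I * D⁻¹) := by rw [hNdef]; ring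
  -- raise to the power q and conclude
  have hlne : ENNReal.ofReal l ≠ 0 := (ENNReal.ofReal_pos.2 hl).ne'
  have hDq : D ^ q = ENNReal.ofReal l * K2 ^ q := by
    rw [hDdef, ENNReal.ofReal_rpow_of_pos hDpos,
      Real.mul_rpow (by positivity) (by positivity),
      ← Real.rpow_mul hl.le, hpq, Real.rpow_one,
      ENNReal.ofReal_mul hl.le, hK2def, ← ENNReal.ofReal_rpow_of_pos hK2pos]
  have hDinvq : (D⁻¹) ^ q = (ENNReal.ofReal l)⁻¹ * (K2 ^ q)⁻¹ := by
    rw [ENNReal.inv_rpow, hDq,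
      ENNReal.mul_inv (Or.inl hlne) (Or.inl ENNReal.ofReal_ne_top)]
  have hmono : ((volume : Measure (EuclideanSpace ℝ (Fin (k+1+1)))).toSphere S) ^ q
      ≤ N ^ q * I ^ q * ((ENNReal.ofReal l)⁻¹ * (K2 ^ q)⁻¹) := by
    calc ((volume : Measure (EuclideanSpace ℝ (Fin (k+1+1)))).toSphere S) ^ q
        ≤ (N * (I * D⁻¹)) ^ q := ENNReal.rpow_le_rpow hσS hq.le
      _ = N ^ q * (I ^ q * (D⁻¹) ^ q) := by
          simp only [ENNReal.mul_rpow_of_nonneg _ _ hq.le]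
      _ = N ^ q * I ^ q * ((ENNReal.ofReal l)⁻¹ * (K2 ^ q)⁻¹) := by
          rw [hDinvq]; ring
  calc ENNReal.ofReal l *
        ((volume : Measure (EuclideanSpace ℝ (Fin (k+1+1)))).toSphere S) ^ q
      ≤ ENNReal.ofReal l * (N ^ q * I ^ q * ((ENNReal.ofReal l)⁻¹ * (K2 ^ q)⁻¹)) :=
        mul_le_mul_right hmono _
    _ = (N ^ q * (K2 ^ q)⁻¹) * I ^ q * (ENNReal.ofReal l * (ENNReal.ofReal l)⁻¹) := by
        ring
    _ = (N ^ q * (K2 ^ q)⁻¹) * I ^ q := by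
        rw [ENNReal.mul_inv_cancel hlne ENNReal.ofReal_ne_top, mul_one]
end

section
/- Let 1 ≤ p < ∞ and f ∈ L^p(R^n) + L^∞(R^n). Then the K-functional satisfies K(t, f; L^p, L^∞) ≈ ( ∫_0^{t^p} (f^*(s))^p ds )^{1/p} with implicit constants independent of f and t, where f^* is the nonincreasing rearrangement of f. -/
open MeasureTheory Set
open scoped ENNReal NNReal

/-- The nonincreasing rearrangement `f^*(s) = inf {λ ≥ 0 : μ{|f| > λ} ≤ s}`. -/
noncomputable def rearrangement {X : Type*} [MeasurableSpace X] (μ : Measure X)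
    (f : X → ℂ) (s : ℝ) : ℝ≥0∞ :=
  ⨅ l : {l : ℝ≥0 // μ {x | (l : ℝ) < ‖f x‖} ≤ ENNReal.ofReal s}, (l.1 : ℝ≥0∞)

/-- The Peetre K-functional for the couple `(L^p(μ), L^∞(μ))`:
`K(t,f) = inf {‖g‖_p + t‖h‖_∞ : f = g + h}`. -/
noncomputable def KfunctionalLpLinfty {X : Type*} [MeasurableSpace X] (μ : Measure X)
    (p : ℝ) (t : ℝ) (f : X → ℂ) : ℝ≥0∞ :=
  ⨅ gh : {gh : (X → ℂ) × (X → ℂ) // f = gh.1 + gh.2},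
    eLpNorm gh.1.1 (ENNReal.ofReal p) μ + ENNReal.ofReal t * eLpNorm gh.1.2 ⊤ μ

section HolmstedtAux

set_option linter.unusedSectionVars false

variable {X : Type*} [MeasurableSpace X] {μ : Measure X}

lemma rearrangement_le_coe_iff {f : X → ℂ} {s : ℝ} {c : ℝ≥0} :
    rearrangement μ f s ≤ (c : ℝ≥0∞) ↔ μ {x | (c : ℝ) < ‖f x‖} ≤ ENNReal.ofReal s := by
  constructor
  · intro h
    have key : ∀ n : ℕ, ∃ l : ℝ≥0, μ {x | (l : ℝ) < ‖f x‖} ≤ ENNReal.ofReal s ∧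
        (l : ℝ) < (c : ℝ) + ((n : ℝ) + 1)⁻¹ := by
      intro n
      set ε : ℝ≥0 := ((n : ℝ≥0) + 1)⁻¹ with hε
      have hε0 : ε ≠ 0 := by positivity
      have hlt : rearrangement μ f s < ((c + ε : ℝ≥0) : ℝ≥0∞) := by
        refine lt_of_le_of_lt h ?_
        rw [ENNReal.coe_add]
        exact ENNReal.lt_add_right ENNReal.coe_ne_top (by exact_mod_cast hε0)
      rw [rearrangement, iInf_lt_iff] at hlt
      obtain ⟨⟨l, hl⟩, hl2⟩ := hlt
      refine ⟨l, hl, ?_⟩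
      have : l < c + ε := by exact_mod_cast hl2
      have := (NNReal.coe_lt_coe).2 this
      push_cast at this
      rw [hε] at this
      push_cast at this
      linarith
    choose l hl1 hl2 using key
    have hsub : {x | (c : ℝ) < ‖f x‖} ⊆ ⋃ n, {x | (l n : ℝ) < ‖f x‖} := by
      intro x hx
      obtain ⟨n, hn⟩ := exists_nat_one_div_lt (K := ℝ) (sub_pos.2 hx)
      rw [one_div] at hn
      exact mem_iUnion.2 ⟨n, by have := hl2 n; simp only [mem_setOf_eq] at hx ⊢; linarith⟩
    have hdir : Directed (· ⊆ ·) (fun n => {x | (l n : ℝ) < ‖f x‖}) := by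
      intro m n
      rcases le_total (l m) (l n) with h' | h'
      · exact ⟨m, Subset.rfl, fun x (hx : (l n : ℝ) < ‖f x‖) => (lt_of_le_of_lt (by exact_mod_cast h') hx : (l m : ℝ) < ‖f x‖)⟩
      · exact ⟨n, fun x (hx : (l m : ℝ) < ‖f x‖) => (lt_of_le_of_lt (by exact_mod_cast h') hx : (l n : ℝ) < ‖f x‖), Subset.rfl⟩
    calc μ {x | (c : ℝ) < ‖f x‖} ≤ μ (⋃ n, {x | (l n : ℝ) < ‖f x‖}) := measure_mono hsub
      _ = ⨆ n, μ {x | (l n : ℝ) < ‖f x‖} := hdir.measure_iUnion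
      _ ≤ ENNReal.ofReal s := iSup_le hl1
  · intro h
    exact iInf_le (fun l : {l : ℝ≥0 // μ {x | (l : ℝ) < ‖f x‖} ≤ ENNReal.ofReal s} =>
      (l.1 : ℝ≥0∞)) ⟨c, h⟩

lemma coe_lt_rearrangement_iff {f : X → ℂ} {s : ℝ} {c : ℝ≥0} :
    (c : ℝ≥0∞) < rearrangement μ f s ↔ ENNReal.ofReal s < μ {x | (c : ℝ) < ‖f x‖} := by
  rw [← not_le, ← not_le, rearrangement_le_coe_iff]

lemma rearrangement_antitone {f : X → ℂ} : Antitone (rearrangement μ f) := by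
  intro s₁ s₂ h
  exact le_iInf fun l => iInf_le (fun l : {l : ℝ≥0 // μ {x | (l : ℝ) < ‖f x‖} ≤ ENNReal.ofReal s₂} => (l.1 : ℝ≥0∞)) ⟨l.1, l.2.trans (ENNReal.ofReal_le_ofReal h)⟩

lemma rearrangement_mono_norm {u v : X → ℂ} (hle : ∀ x, ‖u x‖ ≤ ‖v x‖) (s : ℝ) :
    rearrangement μ u s ≤ rearrangement μ v s := by
  refine le_iInf fun l => iInf_le (fun l : {l : ℝ≥0 // μ {x | (l : ℝ) < ‖u x‖} ≤ ENNReal.ofReal s} => (l.1 : ℝ≥0∞)) ⟨l.1, le_trans (measure_mono ?_) l.2⟩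
  exact fun x hx => lt_of_lt_of_le hx (hle x)

lemma rearrangement_add_le {f g h : X → ℂ} (hfgh : f = g + h) (s : ℝ) :
    rearrangement μ f s ≤ rearrangement μ g s + eLpNorm h ⊤ μ := by
  set H := eLpNorm h ⊤ μ with hH
  rcases eq_top_or_lt_top H with hHt | hHt
  · rw [hHt]; simp
  rcases eq_top_or_lt_top (rearrangement μ g s) with hgt | hgt
  · rw [hgt]; simp
  refine ENNReal.le_of_forall_pos_le_add fun ε hε hfin => ?_
  have hlt : rearrangement μ g s < rearrangement μ g s + ε :=
    ENNReal.lt_add_right hgt.ne (by exact_mod_cast hε.ne')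
  rw [rearrangement, iInf_lt_iff] at hlt
  obtain ⟨⟨l, hl⟩, hl2⟩ := hlt
  set c₂ : ℝ≥0 := H.toNNReal with hc₂
  have hc₂H : (c₂ : ℝ≥0∞) = H := ENNReal.coe_toNNReal hHt.ne
  have hnull : μ {x | (c₂ : ℝ) < ‖h x‖} = 0 := by
    have hae : ∀ᵐ x ∂μ, ¬ ((c₂ : ℝ) < ‖h x‖) := by
      filter_upwards [ae_le_eLpNormEssSup (f := h) (μ := μ)] with x hx
      rw [not_lt]
      have : (‖h x‖₊ : ℝ≥0∞) ≤ (c₂ : ℝ≥0∞) := by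
        rw [hc₂H, hH]; rwa [eLpNorm_exponent_top]
      exact_mod_cast this
    simpa [ae_iff] using hae
  have hsub : {x | ((l + c₂ : ℝ≥0) : ℝ) < ‖f x‖} ⊆
      {x | (l : ℝ) < ‖g x‖} ∪ {x | (c₂ : ℝ) < ‖h x‖} := by
    intro x hx
    simp only [mem_setOf_eq, mem_union] at hx ⊢
    by_contra hcon
    push_neg at hcon
    have hfx : ‖f x‖ ≤ ‖g x‖ + ‖h x‖ := by rw [hfgh]; exact norm_add_le _ _
    push_cast at hx
    linarith [hcon.1, hcon.2]
  have hmem : μ {x | ((l + c₂ : ℝ≥0) : ℝ) < ‖f x‖} ≤ ENNReal.ofReal s := by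
    calc μ _ ≤ μ ({x | (l : ℝ) < ‖g x‖} ∪ {x | (c₂ : ℝ) < ‖h x‖}) := measure_mono hsub
      _ ≤ μ {x | (l : ℝ) < ‖g x‖} + μ {x | (c₂ : ℝ) < ‖h x‖} := measure_union_le _ _
      _ ≤ ENNReal.ofReal s + 0 := add_le_add hl hnull.le
      _ = ENNReal.ofReal s := by rw [add_zero]
  have : rearrangement μ f s ≤ ((l + c₂ : ℝ≥0) : ℝ≥0∞) :=
    rearrangement_le_coe_iff.2 hmem
  refine this.trans ?_
  rw [ENNReal.coe_add, hc₂H]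
  calc (l : ℝ≥0∞) + H ≤ (rearrangement μ g s + ε) + H := add_le_add hl2.le le_rfl
    _ = rearrangement μ g s + H + ε := by ring

lemma layercake_rpow {α : Type*} [MeasurableSpace α] (ν : Measure α) {φ : α → ℝ}
    (hφ : AEMeasurable φ ν) (hnn : 0 ≤ φ) {p : ℝ} (hp : 1 ≤ p) :
    ∫⁻ a, ENNReal.ofReal (φ a ^ p) ∂ν =
      ∫⁻ t in Ioi (0 : ℝ), ν {a | t < φ a} * ENNReal.ofReal (p * t ^ (p - 1)) := by
  have hp0 : p ≠ 0 := by linarith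
  have hint : ∀ t > (0:ℝ), IntervalIntegrable (fun u : ℝ => p * u ^ (p-1)) volume 0 t := by
    intro t ht
    exact (intervalIntegral.intervalIntegrable_rpow' (by linarith)).const_mul p
  have hg_nn : ∀ᵐ u ∂(volume.restrict (Ioi (0:ℝ))), 0 ≤ p * u ^ (p-1) := by
    filter_upwards [ae_restrict_mem measurableSet_Ioi] with u hu
    have : (0:ℝ) ≤ u ^ (p-1) := Real.rpow_nonneg (le_of_lt hu) _
    positivity
  have key := lintegral_comp_eq_lintegral_meas_lt_mul ν (ae_of_all _ hnn) hφ hint hg_nn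
  rw [← key]
  refine lintegral_congr fun a => ?_
  congr 1
  rw [intervalIntegral.integral_const_mul, integral_rpow (Or.inl (by linarith)),
    sub_add_cancel, Real.zero_rpow hp0]
  field_simp
  rw [sub_zero]

lemma lintegral_rearrangement_rpow {u : X → ℂ} (hu : Measurable u) {p : ℝ} (hp : 1 ≤ p)
    (hfin : ∀ s : ℝ, 0 < s → rearrangement μ u s ≠ ⊤) :
    ∫⁻ s in Ioi (0 : ℝ), (rearrangement μ u s) ^ p = ∫⁻ x, (‖u x‖₊ : ℝ≥0∞) ^ p ∂μ := by
  have hp0 : 0 ≤ p := by linarith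
  set R : ℝ → ℝ := fun s => (rearrangement μ u s).toReal with hR
  have hRmeas : Measurable R :=
    (rearrangement_antitone (μ := μ) (f := u)).measurable.ennreal_toReal
  have hRnn : 0 ≤ R := fun s => ENNReal.toReal_nonneg
  -- LHS rewrite
  have hLHS : ∫⁻ s in Ioi (0 : ℝ), (rearrangement μ u s) ^ p
      = ∫⁻ s in Ioi (0 : ℝ), ENNReal.ofReal (R s ^ p) := by
    refine setLIntegral_congr_fun measurableSet_Ioi (fun s hs => ?_)
    rw [hR]
    rw [← ENNReal.ofReal_rpow_of_nonneg ENNReal.toReal_nonneg hp0,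
      ENNReal.ofReal_toReal (hfin s hs)]
  rw [hLHS, layercake_rpow _ hRmeas.aemeasurable hRnn hp]
  -- RHS rewrite
  have hRHS : ∫⁻ x, (‖u x‖₊ : ℝ≥0∞) ^ p ∂μ = ∫⁻ x, ENNReal.ofReal (‖u x‖ ^ p) ∂μ := by
    refine lintegral_congr fun x => ?_
    rw [← ENNReal.ofReal_rpow_of_nonneg (norm_nonneg _) hp0, ofReal_norm, enorm_eq_nnnorm]
  rw [hRHS, layercake_rpow _ (hu.norm).aemeasurable (fun x => norm_nonneg _) hp]
  -- compare integrands
  refine setLIntegral_congr_fun measurableSet_Ioi (fun lam hlam => ?_)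
  congr 1
  rw [Measure.restrict_apply (measurableSet_lt measurable_const hRmeas)]
  -- volume ({s | lam < R s} ∩ Ioi 0) = μ {x | lam < ‖u x‖}
  set c : ℝ≥0 := lam.toNNReal with hc
  have hcr : (c : ℝ) = lam := Real.coe_toNNReal _ (le_of_lt hlam)
  set D := μ {x | (c : ℝ) < ‖u x‖} with hD
  have hset : ∀ s ∈ Ioi (0:ℝ), (lam < R s ↔ ENNReal.ofReal s < D) := by
    intro s hs
    rw [hR]
    have h1 : lam < (rearrangement μ u s).toReal ↔ ENNReal.ofReal lam < rearrangement μ u s :=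
      (ENNReal.ofReal_lt_iff_lt_toReal (le_of_lt hlam) (hfin s hs)).symm
    rw [h1]
    have : ENNReal.ofReal lam = (c : ℝ≥0∞) := rfl
    rw [this, coe_lt_rearrangement_iff]
  have hμset : {x | lam < ‖u x‖} = {x | (c : ℝ) < ‖u x‖} := by rw [hcr]
  rw [hμset, ← hD]
  rcases eq_top_or_lt_top D with hDt | hDt
  · have : {s | lam < R s} ∩ Ioi 0 = Ioi (0:ℝ) := by
      ext s
      simp only [mem_inter_iff, mem_setOf_eq, mem_Ioi, and_iff_right_iff_imp]
      intro hs
      rw [hset s hs, hDt]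
      exact ENNReal.ofReal_lt_top
    rw [this, hDt, Real.volume_Ioi]
  · have : {s | lam < R s} ∩ Ioi 0 = Ioo 0 D.toReal := by
      ext s
      simp only [mem_inter_iff, mem_setOf_eq, mem_Ioi, mem_Ioo]
      constructor
      · rintro ⟨h1, h2⟩
        refine ⟨h2, ?_⟩
        rw [hset s h2] at h1
        exact (ENNReal.ofReal_lt_iff_lt_toReal (le_of_lt h2) hDt.ne).1 h1
      · rintro ⟨h1, h2⟩
        refine ⟨?_, h1⟩
        rw [hset s h1]
        rwa [ENNReal.ofReal_lt_iff_lt_toReal (le_of_lt h1) hDt.ne]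
    rw [this, Real.volume_Ioo, sub_zero, ENNReal.ofReal_toReal hDt.ne]

lemma rearrangement_ne_top_of_lintegral_ne_top {u : X → ℂ} (hu : Measurable u) {p : ℝ}
    (hp : 1 ≤ p) (hB : ∫⁻ x, (‖u x‖₊ : ℝ≥0∞) ^ p ∂μ ≠ ⊤) {s : ℝ} (hs : 0 < s) :
    rearrangement μ u s ≠ ⊤ := by
  have hp0 : (0:ℝ) < p := by linarith
  set B := ∫⁻ x, (‖u x‖₊ : ℝ≥0∞) ^ p ∂μ with hBdef
  set y := ENNReal.ofReal s with hy
  have hy0 : y ≠ 0 := by simpa [hy] using hs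
  have hyt : y ≠ ⊤ := ENNReal.ofReal_ne_top
  set c : ℝ≥0 := ((B / y).toNNReal) ^ (1 / p) + 1 with hc
  have hdiv_ne_top : B / y ≠ ⊤ := by
    simp [ENNReal.div_eq_top, hy0, hB]
  have h1 : B / y ≤ (c : ℝ≥0∞) ^ p := by
    rw [← ENNReal.coe_toNNReal hdiv_ne_top]
    have key : (((B/y).toNNReal : ℝ≥0∞)) = ((((B/y).toNNReal ^ (1/p)) : ℝ≥0) : ℝ≥0∞) ^ p := by
      rw [← ENNReal.coe_rpow_of_nonneg _ hp0.le]
      congr 1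
      rw [← NNReal.rpow_mul, one_div, inv_mul_cancel₀ hp0.ne', NNReal.rpow_one]
    rw [key]
    gcongr
    exact_mod_cast le_add_of_nonneg_right zero_le_one
  have hc0 : c ≠ 0 := by
    have : (0:ℝ≥0) < c := by rw [hc]; positivity
    exact this.ne'
  have hcp0 : ((c : ℝ≥0∞)) ^ p ≠ 0 := by
    simp [ENNReal.rpow_eq_zero_iff, hc0, ENNReal.coe_ne_top, hp0, not_lt.2 hp0.le]
  have hcpt : ((c : ℝ≥0∞)) ^ p ≠ ⊤ := by
    simp [ENNReal.rpow_eq_top_iff, hc0, hp0, not_lt.2 hp0.le]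
  have hkey : B ≤ (c : ℝ≥0∞) ^ p * y := by
    rw [← ENNReal.div_le_iff hy0 hyt]
    exact h1
  have hcheb : (c : ℝ≥0∞) ^ p * μ {x | (c : ℝ) < ‖u x‖} ≤ B := by
    have hsub : {x | (c : ℝ) < ‖u x‖} ⊆ {x | (c : ℝ≥0∞) ^ p ≤ (‖u x‖₊ : ℝ≥0∞) ^ p} := by
      intro x hx
      simp only [mem_setOf_eq] at hx ⊢
      have : (c : ℝ≥0∞) ≤ (‖u x‖₊ : ℝ≥0∞) := by
        rw [ENNReal.coe_le_coe, ← NNReal.coe_le_coe, coe_nnnorm]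
        exact hx.le
      exact ENNReal.rpow_le_rpow this hp0.le
    calc (c : ℝ≥0∞) ^ p * μ {x | (c : ℝ) < ‖u x‖}
        ≤ (c : ℝ≥0∞) ^ p * μ {x | (c : ℝ≥0∞) ^ p ≤ (‖u x‖₊ : ℝ≥0∞) ^ p} := mul_le_mul_right (measure_mono hsub) _
      _ ≤ B := mul_meas_ge_le_lintegral₀ ((hu.nnnorm.coe_nnreal_ennreal).pow_const _).aemeasurable _
  have hmeas : μ {x | (c : ℝ) < ‖u x‖} ≤ y := by
    by_contra hcon
    rw [not_le] at hcon
    have : (c : ℝ≥0∞) ^ p * y < (c : ℝ≥0∞) ^ p * μ {x | (c : ℝ) < ‖u x‖} :=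
      by simpa only [mul_comm] using ENNReal.mul_lt_mul_left hcp0 hcpt hcon
    exact absurd (hkey.trans_lt (this.trans_le hcheb)) (lt_irrefl _).elim
  have : rearrangement μ u s ≤ (c : ℝ≥0∞) := rearrangement_le_coe_iff.2 hmeas
  exact (this.trans_lt ENNReal.coe_lt_top).ne

noncomputable def trunc (f : X → ℂ) (a : ℝ≥0) (x : X) : ℂ :=
  if ‖f x‖ ≤ (a : ℝ) then f x else ((a : ℝ) * ‖f x‖⁻¹) • f x

noncomputable def tail (f : X → ℂ) (a : ℝ≥0) (x : X) : ℂ := f x - trunc f a x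

lemma tail_add_trunc (f : X → ℂ) (a : ℝ≥0) : f = tail f a + trunc f a := by
  funext x
  simp [tail, Pi.add_apply]

lemma norm_trunc_le (f : X → ℂ) (a : ℝ≥0) (x : X) : ‖trunc f a x‖ ≤ (a : ℝ) := by
  rw [trunc]
  split_ifs with h
  · exact h
  · push_neg at h
    have h0 : (0:ℝ) < ‖f x‖ := lt_of_le_of_lt (NNReal.coe_nonneg a) h
    rw [norm_smul, norm_mul, norm_inv, norm_norm, Real.norm_eq_abs,
      abs_of_nonneg (NNReal.coe_nonneg a), mul_assoc, inv_mul_cancel₀ h0.ne', mul_one]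

lemma norm_trunc_le_norm (f : X → ℂ) (a : ℝ≥0) (x : X) : ‖trunc f a x‖ ≤ ‖f x‖ := by
  rcases le_or_gt ‖f x‖ (a : ℝ) with h | h
  · rw [trunc, if_pos h]
  · exact (norm_trunc_le f a x).trans h.le

lemma norm_tail (f : X → ℂ) (a : ℝ≥0) (x : X) : ‖tail f a x‖ = max (‖f x‖ - (a : ℝ)) 0 := by
  rw [tail, trunc]
  split_ifs with h
  · rw [sub_self, norm_zero, max_eq_right (sub_nonpos.2 h)]
  · push_neg at h
    have h0 : (0:ℝ) < ‖f x‖ := lt_of_le_of_lt (NNReal.coe_nonneg a) h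
    have : f x - ((a : ℝ) * ‖f x‖⁻¹) • f x = (1 - (a : ℝ) * ‖f x‖⁻¹) • f x := by
      rw [sub_smul, one_smul]
    rw [this, norm_smul, Real.norm_eq_abs]
    have h1 : (a : ℝ) * ‖f x‖⁻¹ < 1 := by
      rw [mul_inv_lt_iff₀ h0, one_mul]
      exact h
    rw [abs_of_nonneg (by linarith), max_eq_left (by linarith)]
    have h2 : (1 - (a:ℝ) * ‖f x‖⁻¹) * ‖f x‖ = ‖f x‖ - (a:ℝ) * (‖f x‖⁻¹ * ‖f x‖) := by ring
    rw [h2, inv_mul_cancel₀ h0.ne', mul_one]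

lemma measurable_trunc {f : X → ℂ} (hf : Measurable f) (a : ℝ≥0) : Measurable (trunc f a) := by
  unfold trunc
  exact Measurable.ite (measurableSet_le hf.norm measurable_const)
    hf ((measurable_const.mul hf.norm.inv).smul hf)

lemma measurable_tail_s12 {f : X → ℂ} (hf : Measurable f) (a : ℝ≥0) : Measurable (tail f a) :=
  hf.sub (measurable_trunc hf a)

lemma eLpNorm_top_trunc_le (f : X → ℂ) (a : ℝ≥0) : eLpNorm (trunc f a) ⊤ μ ≤ (a : ℝ≥0∞) := by
  rw [eLpNorm_exponent_top]
  have := eLpNormEssSup_le_of_ae_bound (μ := μ) (f := trunc f a) (C := (a : ℝ))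
    (ae_of_all _ (norm_trunc_le f a))
  rwa [ENNReal.ofReal_coe_nnreal] at this

end HolmstedtAux

/-- Holmstedt-type formula: for `1 ≤ p < ∞` and `f ∈ L^p(ℝ^n) + L^∞(ℝ^n)`,
`K(t, f; L^p, L^∞) ≈ (∫₀^{t^p} (f^*(s))^p ds)^{1/p}` with constants independent of
`f` and `t`. -/
theorem Kfunctional_Lp_Linfty_eq (n : ℕ) (p : ℝ) (hp : 1 ≤ p) :
    ∃ c₁ c₂ : ℝ≥0∞, 0 < c₁ ∧ c₂ < ⊤ ∧
      ∀ f : EuclideanSpace ℝ (Fin n) → ℂ, Measurable f →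
      (∃ g h : EuclideanSpace ℝ (Fin n) → ℂ, f = g + h ∧
        eLpNorm g (ENNReal.ofReal p) volume < ⊤ ∧ eLpNorm h ⊤ volume < ⊤) →
      ∀ t : ℝ, 0 < t →
        c₁ * (∫⁻ s in Ioc (0 : ℝ) (t ^ p),
                (rearrangement volume f s) ^ p) ^ (1 / p)
            ≤ KfunctionalLpLinfty volume p t f ∧
        KfunctionalLpLinfty volume p t f
            ≤ c₂ * (∫⁻ s in Ioc (0 : ℝ) (t ^ p),
                (rearrangement volume f s) ^ p) ^ (1 / p) := by
  have hp0 : (0:ℝ) < p := by linarith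
  set q : ℝ≥0∞ := ENNReal.ofReal p with hq
  have hq0 : q ≠ 0 := by simp [hq, ENNReal.ofReal_eq_zero]; linarith
  have hqt : q ≠ ⊤ := ENNReal.ofReal_ne_top
  have hqr : q.toReal = p := ENNReal.toReal_ofReal hp0.le
  have heLp : ∀ (u : EuclideanSpace ℝ (Fin n) → ℂ),
      eLpNorm u q volume = (∫⁻ x, (‖u x‖₊ : ℝ≥0∞) ^ p ∂volume) ^ (1/p) := by
    intro u
    rw [eLpNorm_eq_lintegral_rpow_enorm_toReal hq0 hqt, hqr]; rfl
  refine ⟨1, 2, zero_lt_one, by norm_num, ?_⟩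
  intro f hf hdec t ht
  set T : ℝ := t ^ p with hTdef
  have hT : 0 < T := Real.rpow_pos_of_pos ht p
  -- finiteness of the rearrangement of f
  obtain ⟨g₀, h₀, hfgh₀, hg₀, hh₀⟩ := hdec
  have hfinf : ∀ s : ℝ, 0 < s → rearrangement volume f s ≠ ⊤ := by
    intro s hs
    set a₀ : ℝ≥0 := (eLpNorm h₀ ⊤ volume).toNNReal with ha₀
    have ha₀e : (a₀ : ℝ≥0∞) = eLpNorm h₀ ⊤ volume := ENNReal.coe_toNNReal hh₀.ne
    have haeh : ∀ᵐ x ∂(volume : Measure (EuclideanSpace ℝ (Fin n))), ‖h₀ x‖ ≤ (a₀ : ℝ) := by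
      filter_upwards [ae_le_eLpNormEssSup (f := h₀) (μ := volume)] with x hx
      have : (‖h₀ x‖₊ : ℝ≥0∞) ≤ (a₀ : ℝ≥0∞) := by
        rw [ha₀e, eLpNorm_exponent_top] at *; exact hx
      exact_mod_cast this
    have haeg : ∀ᵐ x ∂(volume : Measure (EuclideanSpace ℝ (Fin n))),
        ‖tail f a₀ x‖ ≤ ‖g₀ x‖ := by
      filter_upwards [haeh] with x hx
      rw [norm_tail]
      have hfx : ‖f x‖ ≤ ‖g₀ x‖ + ‖h₀ x‖ := by rw [hfgh₀]; exact norm_add_le _ _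
      exact max_le (by linarith) (norm_nonneg _)
    have htail_lt : eLpNorm (tail f a₀) q volume < ⊤ :=
      lt_of_le_of_lt (eLpNorm_mono_ae haeg) hg₀
    have hBfin : ∫⁻ x, (‖tail f a₀ x‖₊ : ℝ≥0∞) ^ p ∂volume ≠ ⊤ := by
      have h2 : ((∫⁻ x, (‖tail f a₀ x‖₊ : ℝ≥0∞) ^ p ∂volume) ^ (1/p)) ^ p
          = ∫⁻ x, (‖tail f a₀ x‖₊ : ℝ≥0∞) ^ p ∂volume := by
        rw [← ENNReal.rpow_mul, one_div, inv_mul_cancel₀ hp0.ne', ENNReal.rpow_one]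
      rw [← h2]
      exact (ENNReal.rpow_lt_top_of_nonneg hp0.le ((heLp _ ▸ htail_lt).ne)).ne
    have h1 := rearrangement_add_le (μ := volume) (tail_add_trunc f a₀) s
    refine (lt_of_le_of_lt h1 ?_).ne
    have h2 := rearrangement_ne_top_of_lintegral_ne_top (μ := volume)
      (measurable_tail_s12 hf a₀) hp hBfin hs
    have h3 : eLpNorm (trunc f a₀) ⊤ volume < ⊤ :=
      lt_of_le_of_lt (eLpNorm_top_trunc_le f a₀) ENNReal.coe_lt_top
    exact ENNReal.add_lt_top.2 ⟨h2.lt_top, h3⟩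
  constructor
  · -- lower bound
    rw [one_mul, KfunctionalLpLinfty]
    refine le_iInf ?_
    rintro ⟨⟨g, h⟩, hgh⟩
    simp only
    rcases eq_top_or_lt_top (eLpNorm g q volume) with hg | hg
    · rw [hg, top_add]; exact le_top
    rcases eq_top_or_lt_top (eLpNorm h ⊤ volume) with hh | hh
    · rw [hh, ENNReal.mul_top (ENNReal.ofReal_pos.2 ht).ne', add_top]; exact le_top
    set a : ℝ≥0 := (eLpNorm h ⊤ volume).toNNReal with ha
    have hae : (a : ℝ≥0∞) = eLpNorm h ⊤ volume := ENNReal.coe_toNNReal hh.ne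
    set G : EuclideanSpace ℝ (Fin n) → ℂ := tail f a with hG
    have hGmeas : Measurable G := measurable_tail_s12 hf a
    have hrG : ∀ s : ℝ, rearrangement volume G s ≤ rearrangement volume f s := by
      intro s
      refine rearrangement_mono_norm (fun x => ?_) s
      rw [hG, norm_tail]
      exact max_le (by linarith [NNReal.coe_nonneg a]) (norm_nonneg _)
    have hfinG : ∀ s : ℝ, 0 < s → rearrangement volume G s ≠ ⊤ :=
      fun s hs => ((hrG s).trans_lt (hfinf s hs).lt_top).ne
    have step1 : ∀ s : ℝ, rearrangement volume f s
        ≤ rearrangement volume G s + (a : ℝ≥0∞) := by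
      intro s
      refine (rearrangement_add_le (μ := volume) (tail_add_trunc f a) s).trans ?_
      exact add_le_add le_rfl (eLpNorm_top_trunc_le f a)
    have haeg : ∀ᵐ x ∂(volume : Measure (EuclideanSpace ℝ (Fin n))), ‖G x‖ ≤ ‖g x‖ := by
      filter_upwards [ae_le_eLpNormEssSup (f := h) (μ := volume)] with x hx
      have hhx : ‖h x‖ ≤ (a : ℝ) := by
        have : (‖h x‖₊ : ℝ≥0∞) ≤ (a : ℝ≥0∞) := by
          rw [hae, eLpNorm_exponent_top]; exact hx
        exact_mod_cast this
      rw [hG, norm_tail]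
      have hfx : ‖f x‖ ≤ ‖g x‖ + ‖h x‖ := by rw [hgh]; exact norm_add_le _ _
      exact max_le (by linarith) (norm_nonneg _)
    calc (∫⁻ s in Ioc (0:ℝ) T, rearrangement volume f s ^ p) ^ (1/p)
        ≤ (∫⁻ s in Ioc (0:ℝ) T,
            (rearrangement volume G s + (a : ℝ≥0∞)) ^ p) ^ (1/p) := by
          refine ENNReal.rpow_le_rpow (lintegral_mono fun s => ?_) (by positivity)
          exact ENNReal.rpow_le_rpow (step1 s) hp0.le
      _ ≤ (∫⁻ s in Ioc (0:ℝ) T, rearrangement volume G s ^ p) ^ (1/p)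
          + (∫⁻ _ in Ioc (0:ℝ) T, (a : ℝ≥0∞) ^ p) ^ (1/p) :=
          ENNReal.lintegral_Lp_add_le
            (f := fun s => rearrangement volume G s) (g := fun _ => (a : ℝ≥0∞))
            (rearrangement_antitone (μ := volume) (f := G)).measurable.aemeasurable
            aemeasurable_const hp
      _ ≤ eLpNorm g q volume + ENNReal.ofReal t * eLpNorm h ⊤ volume := by
          refine add_le_add ?_ ?_
          · have h1 : (∫⁻ s in Ioc (0:ℝ) T, rearrangement volume G s ^ p)
                ≤ ∫⁻ s in Ioi (0:ℝ), rearrangement volume G s ^ p :=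
              lintegral_mono' (Measure.restrict_mono Ioc_subset_Ioi_self le_rfl) le_rfl
            have h2 := lintegral_rearrangement_rpow (μ := volume) hGmeas hp hfinG
            refine (ENNReal.rpow_le_rpow h1 (by positivity)).trans ?_
            rw [h2, ← heLp]
            exact eLpNorm_mono_ae haeg
          · rw [setLIntegral_const, Real.volume_Ioc, sub_zero,
              ENNReal.mul_rpow_of_nonneg _ _ (by positivity),
              ← ENNReal.rpow_mul, one_div, mul_inv_cancel₀ hp0.ne', ENNReal.rpow_one,
              ← ENNReal.ofReal_rpow_of_nonneg ht.le hp0.le,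
              ← ENNReal.rpow_mul, mul_inv_cancel₀ hp0.ne', ENNReal.rpow_one, hae, mul_comm]
  · -- upper bound
    rcases eq_top_or_lt_top (∫⁻ s in Ioc (0:ℝ) T, rearrangement volume f s ^ p) with hI | hI
    · rw [hI, ENNReal.top_rpow_of_pos (by positivity), ENNReal.mul_top (by norm_num)]
      exact le_top
    set I : ℝ≥0∞ := (∫⁻ s in Ioc (0:ℝ) T, rearrangement volume f s ^ p) ^ (1/p) with hIdef
    set a : ℝ≥0 := (rearrangement volume f T).toNNReal with ha
    have hae : (a : ℝ≥0∞) = rearrangement volume f T := ENNReal.coe_toNNReal (hfinf T hT)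
    set G : EuclideanSpace ℝ (Fin n) → ℂ := tail f a with hG
    set H : EuclideanSpace ℝ (Fin n) → ℂ := trunc f a with hH
    have hGmeas : Measurable G := measurable_tail_s12 hf a
    have hrG : ∀ s : ℝ, rearrangement volume G s ≤ rearrangement volume f s := by
      intro s
      refine rearrangement_mono_norm (fun x => ?_) s
      rw [hG, norm_tail]
      exact max_le (by linarith [NNReal.coe_nonneg a]) (norm_nonneg _)
    have hfinG : ∀ s : ℝ, 0 < s → rearrangement volume G s ≠ ⊤ :=
      fun s hs => ((hrG s).trans_lt (hfinf s hs).lt_top).ne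
    have hKle : KfunctionalLpLinfty volume p t f
        ≤ eLpNorm G q volume + ENNReal.ofReal t * eLpNorm H ⊤ volume :=
      iInf_le (fun gh : {gh : (EuclideanSpace ℝ (Fin n) → ℂ) × (EuclideanSpace ℝ (Fin n) → ℂ) //
        f = gh.1 + gh.2} => eLpNorm gh.1.1 q volume + ENNReal.ofReal t * eLpNorm gh.1.2 ⊤ volume)
        ⟨(G, H), tail_add_trunc f a⟩
    have hdfa : volume {x | (a : ℝ) < ‖f x‖} ≤ ENNReal.ofReal T :=
      rearrangement_le_coe_iff.1 hae.ge
    have hGzero : ∀ s : ℝ, s ∈ Ioi T → rearrangement volume G s = 0 := by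
      intro s hs
      have h0 : rearrangement volume G s ≤ ((0 : ℝ≥0) : ℝ≥0∞) := by
        refine rearrangement_le_coe_iff.2 ?_
        have hsub : {x | ((0:ℝ≥0) : ℝ) < ‖G x‖} ⊆ {x | (a : ℝ) < ‖f x‖} := by
          intro x hx
          simp only [NNReal.coe_zero, mem_setOf_eq] at hx ⊢
          rw [hG, norm_tail] at hx
          rcases lt_or_ge (a : ℝ) ‖f x‖ with h' | h'
          · exact h'
          · exact absurd hx (by rw [max_eq_right (by linarith)]; exact lt_irrefl 0)
        refine (measure_mono hsub).trans (hdfa.trans ?_)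
        exact ENNReal.ofReal_le_ofReal (le_of_lt hs)
      simpa using h0
    have hbound1 : eLpNorm G q volume ≤ I := by
      rw [heLp, ← lintegral_rearrangement_rpow (μ := volume) hGmeas hp hfinG]
      rw [← Ioc_union_Ioi_eq_Ioi hT.le, lintegral_union measurableSet_Ioi Ioc_disjoint_Ioi_same]
      have hzero : ∫⁻ s in Ioi T, rearrangement volume G s ^ p = 0 := by
        rw [setLIntegral_congr_fun measurableSet_Ioi
          (fun s hs => by rw [hGzero s hs, ENNReal.zero_rpow_of_pos hp0])]
        simp
      rw [hzero, add_zero, hIdef]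
      refine ENNReal.rpow_le_rpow (lintegral_mono fun s => ?_) (by positivity)
      exact ENNReal.rpow_le_rpow (hrG s) hp0.le
    have hbound2 : ENNReal.ofReal t * (a : ℝ≥0∞) ≤ I := by
      have hcalc : ENNReal.ofReal t * (a : ℝ≥0∞)
          = (∫⁻ _ in Ioc (0:ℝ) T, (a : ℝ≥0∞) ^ p) ^ (1/p) := by
        rw [setLIntegral_const, Real.volume_Ioc, sub_zero,
          ENNReal.mul_rpow_of_nonneg _ _ (by positivity),
          ← ENNReal.rpow_mul, one_div, mul_inv_cancel₀ hp0.ne', ENNReal.rpow_one,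
          ← ENNReal.ofReal_rpow_of_nonneg ht.le hp0.le,
          ← ENNReal.rpow_mul, mul_inv_cancel₀ hp0.ne', ENNReal.rpow_one, mul_comm]
      rw [hcalc, hIdef]
      refine ENNReal.rpow_le_rpow ?_ (by positivity)
      refine lintegral_mono_ae ?_
      filter_upwards [ae_restrict_mem measurableSet_Ioc] with s hs
      refine ENNReal.rpow_le_rpow ?_ hp0.le
      rw [hae]
      exact rearrangement_antitone (μ := volume) hs.2
    calc KfunctionalLpLinfty volume p t f
        ≤ eLpNorm G q volume + ENNReal.ofReal t * eLpNorm H ⊤ volume := hKle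
      _ ≤ I + ENNReal.ofReal t * (a : ℝ≥0∞) := by
          refine add_le_add hbound1 (mul_le_mul_right ?_ _)
          rw [hH, hae]
          exact (eLpNorm_top_trunc_le f a).trans_eq hae
      _ ≤ I + I := add_le_add le_rfl hbound2
      _ = 2 * I := (two_mul I).symm
end
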